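/- arXiv:0811.3370 — 10 statements merged into one kernel-verified Lean document; each statement's English description precedes it below -/
import Mathlib

section
/- Let f and g be orientation-reversing C^∞ diffeomorphisms of ℝ fixing 0. The following are equivalent: (1) there exists h ∈ Diffeo⁺ with f = h⁻¹ ∘ g ∘ h; (2)(a) there exists h₁ ∈ Diffeo⁺ fixing 0 such that f∘f = h₁⁻¹ ∘ (g∘g) ∘ h₁, and (b) setting g₁ = h₁⁻¹ ∘ g ∘ h₁, there exists h₂ ∈ Diffeo⁺ fixing 0 and commuting with f∘f such that T_0 f = (T_0 g₁)^(T_0 h₂), i.e. the maps h₂∘f and g₁∘h₂ have equal n-th derivatives at 0 for every n ≥ 1. -/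
/-- `f` is a C^∞ diffeomorphism of ℝ: a bijection such that both `f` and its
inverse are infinitely differentiable. -/
def IsDiffeo (f : ℝ → ℝ) : Prop :=
  Function.Bijective f ∧ ContDiff ℝ (⊤ : ℕ∞) f ∧ ContDiff ℝ (⊤ : ℕ∞) (Function.invFun f)

noncomputable section
open Function Set
open scoped ContDiff

private lemma inf_pos' : ((⊤ : ℕ∞) : WithTop ℕ∞) ≠ 0 := by
  simp

private lemma IsDiffeo.diffble {f : ℝ → ℝ} (hf : IsDiffeo f) : Differentiable ℝ f :=
  hf.2.1.differentiable inf_pos'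

private lemma IsDiffeo.leftInv {f : ℝ → ℝ} (hf : IsDiffeo f) (x : ℝ) :
    Function.invFun f (f x) = x :=
  Function.leftInverse_invFun hf.1.injective x

private lemma IsDiffeo.rightInv {f : ℝ → ℝ} (hf : IsDiffeo f) (x : ℝ) :
    f (Function.invFun f x) = x :=
  Function.rightInverse_invFun hf.1.surjective x

private lemma IsDiffeo.deriv_ne_zero {f : ℝ → ℝ} (hf : IsDiffeo f) (x : ℝ) : deriv f x ≠ 0 := by
  have h1 : HasDerivAt f (deriv f x) x := (hf.diffble x).hasDerivAt
  have h2 : HasDerivAt (Function.invFun f) (deriv (Function.invFun f) (f x)) (f x) :=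
    ((hf.2.2.differentiable inf_pos') (f x)).hasDerivAt
  have h3 : HasDerivAt (Function.invFun f ∘ f) (deriv (Function.invFun f) (f x) * deriv f x) x :=
    h2.comp x h1
  have h4 : (Function.invFun f ∘ f) = id := funext fun y => hf.leftInv y
  rw [h4] at h3
  have h5 : deriv (Function.invFun f) (f x) * deriv f x = 1 := h3.unique (hasDerivAt_id x)
  intro h
  rw [h, mul_zero] at h5
  exact zero_ne_one h5

private lemma isDiffeo_invFun {f : ℝ → ℝ} (hf : IsDiffeo f) : IsDiffeo (Function.invFun f) := by
  refine ⟨?_, hf.2.2, ?_⟩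
  · exact Function.bijective_iff_has_inverse.2 ⟨f, fun x => hf.rightInv x, fun x => hf.leftInv x⟩
  · have : Function.invFun (Function.invFun f) = f := by
      apply Function.invFun_eq_of_injective_of_rightInverse
      · intro a b hab
        have := congrArg f hab
        rwa [hf.rightInv, hf.rightInv] at this
      · exact fun x => hf.leftInv x
    rw [this]; exact hf.2.1

private lemma invFun_strictMono {f : ℝ → ℝ} (hb : Function.Bijective f) (hm : StrictMono f) :
    StrictMono (Function.invFun f) := by
  intro a b hab
  have := Function.rightInverse_invFun hb.2
  rw [← this a, ← this b] at hab
  exact hm.lt_iff_lt.1 hab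

private lemma invFun_strictAnti {f : ℝ → ℝ} (hb : Function.Bijective f) (hm : StrictAnti f) :
    StrictAnti (Function.invFun f) := by
  intro a b hab
  have := Function.rightInverse_invFun hb.2
  rw [← this a, ← this b] at hab
  exact hm.lt_iff_gt.1 hab

private lemma glue_aux (n : ℕ) : ∀ (u v : ℝ → ℝ), ContDiff ℝ (⊤:ℕ∞) u → ContDiff ℝ (⊤:ℕ∞) v →
    (∀ m : ℕ, iteratedDeriv m u 0 = iteratedDeriv m v 0) →
    ContDiff ℝ (n : ℕ) (fun x : ℝ => if x ≤ 0 then u x else v x) := by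
  induction n with
  | zero =>
    intro u v hu hv h
    rw [show ((0:ℕ) : WithTop ℕ∞) = 0 by norm_cast]
    rw [contDiff_zero]
    apply Continuous.if_le hu.continuous hv.continuous continuous_id continuous_const
    intro x hx
    subst hx
    have := h 0
    simpa [iteratedDeriv_zero] using this
  | succ n ih =>
    intro u v hu hv h
    have hu' : Differentiable ℝ u := hu.differentiable inf_pos'
    have hv' : Differentiable ℝ v := hv.differentiable inf_pos'
    have huv0 : u 0 = v 0 := by have := h 0; simpa [iteratedDeriv_zero] using this
    have hduv0 : deriv u 0 = deriv v 0 := by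
      have := h 1; simpa [iteratedDeriv_one] using this
    have hder : ∀ x : ℝ, HasDerivAt (fun x : ℝ => if x ≤ 0 then u x else v x)
        ((fun x : ℝ => if x ≤ 0 then deriv u x else deriv v x) x) x := by
      intro x
      rcases lt_trichotomy x 0 with hx | hx | hx
      · have hev : (fun x : ℝ => if x ≤ 0 then u x else v x) =ᶠ[nhds x] u := by
          filter_upwards [Iio_mem_nhds hx] with y hy
          simp [le_of_lt (mem_Iio.1 hy)]
        simp only [if_pos (le_of_lt hx)]
        exact (hu' x).hasDerivAt.congr_of_eventuallyEq hev
      · subst hx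
        have H1 : HasDerivWithinAt (fun x : ℝ => if x ≤ 0 then u x else v x)
            (deriv u 0) (Iic 0) 0 := by
          apply (hu' 0).hasDerivAt.hasDerivWithinAt.congr
          · intro y hy; simp [mem_Iic.1 hy]
          · simp
        have H2 : HasDerivWithinAt (fun x : ℝ => if x ≤ 0 then u x else v x)
            (deriv u 0) (Ici 0) 0 := by
          rw [hduv0]
          apply (hv' 0).hasDerivAt.hasDerivWithinAt.congr
          · intro y hy
            rcases eq_or_lt_of_le (mem_Ici.1 hy) with h0 | h0
            · simp [← h0, huv0]
            · simp [not_le.2 h0]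
          · simp [huv0]
        have := H1.union H2
        rw [Iic_union_Ici] at this
        simpa [hasDerivWithinAt_univ] using this
      · have hev : (fun x : ℝ => if x ≤ 0 then u x else v x) =ᶠ[nhds x] v := by
          filter_upwards [Ioi_mem_nhds hx] with y hy
          simp [not_le.2 (mem_Ioi.1 hy)]
        simp only [if_neg (not_le.2 hx)]
        exact (hv' x).hasDerivAt.congr_of_eventuallyEq hev
    have hdiff : Differentiable ℝ (fun x : ℝ => if x ≤ 0 then u x else v x) :=
      fun x => (hder x).differentiableAt
    have hderiv_eq : deriv (fun x : ℝ => if x ≤ 0 then u x else v x) =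
        fun x : ℝ => if x ≤ 0 then deriv u x else deriv v x :=
      funext fun x => (hder x).deriv
    rw [show ((n+1:ℕ) : WithTop ℕ∞) = (n : WithTop ℕ∞) + 1 by push_cast; ring]
    rw [contDiff_succ_iff_deriv]
    refine ⟨hdiff, by simp, ?_⟩
    rw [hderiv_eq]
    apply ih
    · exact (contDiff_infty_iff_deriv.1 hu).2
    · exact (contDiff_infty_iff_deriv.1 hv).2
    · intro m
      rw [← iteratedDeriv_succ']
      rw [← iteratedDeriv_succ']
      exact h (m+1)

private lemma glue_smooth {u v : ℝ → ℝ} (hu : ContDiff ℝ (⊤:ℕ∞) u) (hv : ContDiff ℝ (⊤:ℕ∞) v)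
    (h : ∀ m : ℕ, iteratedDeriv m u 0 = iteratedDeriv m v 0) :
    ContDiff ℝ (⊤:ℕ∞) (fun x : ℝ => if x ≤ 0 then u x else v x) :=
  contDiff_infty.2 fun n => glue_aux n u v hu hv h

private lemma contDiff_invFun {H : ℝ → ℝ} (hc : ContDiff ℝ (⊤:ℕ∞) H) (hb : Function.Bijective H)
    (hd : ∀ x, deriv H x ≠ 0) : ContDiff ℝ (⊤:ℕ∞) (Function.invFun H) := by
  rw [contDiff_iff_contDiffAt]
  intro y
  set x := Function.invFun H y with hx
  have hHx : H x = y := Function.rightInverse_invFun hb.2 y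
  have hca : ContDiffAt ℝ ((⊤:ℕ∞) : WithTop ℕ∞) H x := hc.contDiffAt
  have hda : HasDerivAt H (deriv H x) x := (hc.differentiable inf_pos' x).hasDerivAt
  have hfd : HasFDerivAt H
      ((ContinuousLinearEquiv.unitsEquivAut ℝ (Units.mk0 _ (hd x))) : ℝ →L[ℝ] ℝ) x :=
    hda.hasFDerivAt_equiv (hd x)
  have hstrict := hca.hasStrictFDerivAt' hfd inf_pos'
  have hli : ContDiffAt ℝ ((⊤:ℕ∞) : WithTop ℕ∞) (hca.localInverse hfd inf_pos') (H x) :=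
    hca.to_localInverse hfd inf_pos'
  have hev : ∀ᶠ z in nhds (H x), H (hca.localInverse hfd inf_pos' z) = z :=
    hstrict.eventually_right_inverse
  have hev2 : Function.invFun H =ᶠ[nhds (H x)] hca.localInverse hfd inf_pos' := by
    filter_upwards [hev] with z hz
    conv_lhs => rw [← hz]
    exact Function.leftInverse_invFun hb.1 _
  rw [← hHx]
  exact hli.congr_of_eventuallyEq hev2

theorem reduction_theorem
    (f g : ℝ → ℝ) (hf : IsDiffeo f) (hg : IsDiffeo g)
    (hfa : StrictAnti f) (hga : StrictAnti g)
    (hf0 : f 0 = 0) (hg0 : g 0 = 0) :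
    (∃ h : ℝ → ℝ, IsDiffeo h ∧ StrictMono h ∧ f = Function.invFun h ∘ g ∘ h) ↔
    (∃ h₁ : ℝ → ℝ, IsDiffeo h₁ ∧ StrictMono h₁ ∧ h₁ 0 = 0 ∧
      f ∘ f = Function.invFun h₁ ∘ (g ∘ g) ∘ h₁ ∧
      ∃ h₂ : ℝ → ℝ, IsDiffeo h₂ ∧ StrictMono h₂ ∧ h₂ 0 = 0 ∧
        h₂ ∘ (f ∘ f) = (f ∘ f) ∘ h₂ ∧
        ∀ n : ℕ, 1 ≤ n →
          iteratedDeriv n (h₂ ∘ f) 0 =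
            iteratedDeriv n ((Function.invFun h₁ ∘ g ∘ h₁) ∘ h₂) 0) := by
  constructor
  · rintro ⟨h, hh, hhm, hfe⟩
    have hid : Function.invFun (id : ℝ → ℝ) = id := by
      funext x
      exact Function.leftInverse_invFun (fun a b hab => hab) x
    have hdid : IsDiffeo (id : ℝ → ℝ) :=
      ⟨Function.bijective_id, contDiff_id, by rw [hid]; exact contDiff_id⟩
    have hh0 : h 0 = 0 := by
      have h1 : Function.invFun h (g (h 0)) = 0 := by
        have := congrFun hfe 0
        simp only [Function.comp_apply] at this
        rw [← this, hf0]
      have h2 : g (h 0) = h 0 := by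
        have := congrArg h h1
        rwa [hh.rightInv] at this
      rcases lt_trichotomy (h 0) 0 with hlt | heq | hgt
      · have h5 : g 0 < g (h 0) := hga hlt
        rw [hg0, h2] at h5
        exact absurd h5 (not_lt.2 (le_of_lt hlt))
      · exact heq
      · have h5 : g (h 0) < g 0 := hga hgt
        rw [hg0, h2] at h5
        exact absurd h5 (not_lt.2 (le_of_lt hgt))
    refine ⟨h, hh, hhm, hh0, ?_, id, hdid, strictMono_id, rfl, ?_, ?_⟩
    · funext x
      have h1 := congrFun hfe x
      have h2 := congrFun hfe (f x)
      simp only [Function.comp_apply] at h1 h2 ⊢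
      rw [h2, h1, hh.rightInv]
    · rfl
    · intro n _
      rw [Function.id_comp, Function.comp_id, ← hfe]
  · rintro ⟨h₁, hh₁, hm₁, h₁0, hsq, h₂, hh₂, hm₂, h₂0, hcomm, hder⟩
    set g₁ : ℝ → ℝ := Function.invFun h₁ ∘ g ∘ h₁ with hg₁def
    have hinv₁0 : Function.invFun h₁ 0 = 0 := by
      conv_lhs => rw [← h₁0]
      exact hh₁.leftInv 0
    have hg₁bij : Function.Bijective g₁ :=
      ((isDiffeo_invFun hh₁).1.comp (hg.1.comp hh₁.1))
    have hg₁inv_eq : Function.invFun g₁ = Function.invFun h₁ ∘ Function.invFun g ∘ h₁ := by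
      apply Function.invFun_eq_of_injective_of_rightInverse hg₁bij.1
      intro x
      simp only [hg₁def, Function.comp_apply]
      rw [hh₁.rightInv, hg.rightInv, hh₁.leftInv]
    have hg₁d : IsDiffeo g₁ := by
      refine ⟨hg₁bij, ?_, ?_⟩
      · exact (isDiffeo_invFun hh₁).2.1.comp (hg.2.1.comp hh₁.2.1)
      · rw [hg₁inv_eq]
        exact (isDiffeo_invFun hh₁).2.1.comp (hg.2.2.comp hh₁.2.1)
    have hg₁a : StrictAnti g₁ := by
      intro a b hab
      exact invFun_strictMono hh₁.1 hm₁ (hga (hm₁ hab))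
    have hg₁0 : g₁ 0 = 0 := by
      simp only [hg₁def, Function.comp_apply, h₁0, hg0, hinv₁0]
    have hinvg₁0 : Function.invFun g₁ 0 = 0 := by
      conv_lhs => rw [← hg₁0]
      exact hg₁d.leftInv 0
    have hinvg₁a : StrictAnti (Function.invFun g₁) := invFun_strictAnti hg₁bij hg₁a
    have hffgg : ∀ x, f (f x) = g₁ (g₁ x) := by
      intro x
      have := congrFun hsq x
      simp only [Function.comp_apply] at this
      rw [this]
      simp only [hg₁def, Function.comp_apply, hh₁.rightInv]
    -- the glued function
    have hglue : ∀ m : ℕ, iteratedDeriv m (h₂ ∘ f) 0 = iteratedDeriv m (g₁ ∘ h₂) 0 := by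
      intro m
      rcases Nat.eq_zero_or_pos m with hm | hm
      · subst hm
        rw [iteratedDeriv_zero, iteratedDeriv_zero]
        simp [Function.comp_apply, hf0, h₂0, hg₁0]
      · exact hder m hm
    set K : ℝ → ℝ := fun x => if x ≤ 0 then (h₂ ∘ f) x else (g₁ ∘ h₂) x with hKdef
    have hK : ContDiff ℝ (⊤:ℕ∞) K :=
      glue_smooth (hh₂.2.1.comp hf.2.1) (hg₁d.2.1.comp hh₂.2.1) hglue
    set H : ℝ → ℝ := Function.invFun g₁ ∘ K with hHdef
    have hHsmooth : ContDiff ℝ (⊤:ℕ∞) H := hg₁d.2.2.comp hK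
    have Hneg : ∀ x : ℝ, x ≤ 0 → H x = Function.invFun g₁ (h₂ (f x)) := by
      intro x hx
      simp only [hHdef, hKdef, Function.comp_apply, if_pos hx]
    have Hpos : ∀ x : ℝ, ¬ x ≤ 0 → H x = h₂ x := by
      intro x hx
      simp only [hHdef, hKdef, Function.comp_apply, if_neg hx]
      rw [hg₁d.leftInv]
    have Hge : ∀ x : ℝ, 0 ≤ x → H x = h₂ x := by
      intro x hx
      rcases eq_or_lt_of_le hx with h0 | h0
      · subst h0
        rw [Hneg 0 le_rfl, hf0, h₂0, hinvg₁0]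
      · exact Hpos x (not_le.2 h0)
    have H0 : H 0 = 0 := by rw [Hge 0 le_rfl, h₂0]
    have hHm : StrictMono H := by
      intro a b hab
      rcases le_or_gt b 0 with hb0 | hb0
      · rw [Hneg a (le_of_lt (lt_of_lt_of_le hab hb0)), Hneg b hb0]
        exact hinvg₁a (hm₂ (hfa hab))
      · rw [Hpos b (not_le.2 hb0)]
        rcases le_or_gt a 0 with ha0 | ha0
        · rw [Hneg a ha0]
          have h1 : 0 ≤ f a := by have := hfa.antitone ha0; rwa [hf0] at this
          have h2 : 0 ≤ h₂ (f a) := by have := hm₂.monotone h1; rwa [h₂0] at this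
          have h3 : Function.invFun g₁ (h₂ (f a)) ≤ 0 := by
            have := hinvg₁a.antitone h2; rwa [hinvg₁0] at this
          have h4 : 0 < h₂ b := by have := hm₂ hb0; rwa [h₂0] at this
          linarith
        · rw [Hpos a (not_le.2 ha0)]
          exact hm₂ hab
    have hHbij : Function.Bijective H := by
      constructor
      · exact hHm.injective
      · intro z
        rcases le_or_gt z 0 with hz | hz
        · refine ⟨Function.invFun f (Function.invFun h₂ (g₁ z)), ?_⟩
          have h1 : 0 ≤ g₁ z := by have := hg₁a.antitone hz; rwa [hg₁0] at this
          have hinvh₂0 : Function.invFun h₂ 0 = 0 := by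
            conv_lhs => rw [← h₂0]
            exact hh₂.leftInv 0
          have h2 : 0 ≤ Function.invFun h₂ (g₁ z) := by
            have := (invFun_strictMono hh₂.1 hm₂).monotone h1
            rwa [hinvh₂0] at this
          have h3 : Function.invFun f (Function.invFun h₂ (g₁ z)) ≤ 0 := by
            have hf00 : Function.invFun f 0 = 0 := by
              conv_lhs => rw [← hf0]
              exact hf.leftInv 0
            have := (invFun_strictAnti hf.1 hfa).antitone h2
            rwa [hf00] at this
          rw [Hneg _ h3, hf.rightInv, hh₂.rightInv, hg₁d.leftInv]
        · refine ⟨Function.invFun h₂ z, ?_⟩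
          have h1 : 0 < Function.invFun h₂ z := by
            have hinvh₂0 : Function.invFun h₂ 0 = 0 := by
              conv_lhs => rw [← h₂0]
              exact hh₂.leftInv 0
            have := invFun_strictMono hh₂.1 hm₂ hz
            rwa [hinvh₂0] at this
          rw [Hpos _ (not_le.2 h1), hh₂.rightInv]
    have hHd : ∀ x, deriv H x ≠ 0 := by
      intro x
      rcases lt_trichotomy x 0 with hx | hx | hx
      · have hev : H =ᶠ[nhds x] (Function.invFun g₁ ∘ h₂ ∘ f) := by
          filter_upwards [Iio_mem_nhds hx] with y hy
          rw [Hneg y (le_of_lt (mem_Iio.1 hy))]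
          rfl
        have hc : HasDerivAt (Function.invFun g₁ ∘ h₂ ∘ f)
            (deriv (Function.invFun g₁) (h₂ (f x)) * (deriv h₂ (f x) * deriv f x)) x := by
          exact (((isDiffeo_invFun hg₁d).diffble _).hasDerivAt).comp x
            (((hh₂.diffble _).hasDerivAt).comp x ((hf.diffble x).hasDerivAt))
        have : HasDerivAt H
            (deriv (Function.invFun g₁) (h₂ (f x)) * (deriv h₂ (f x) * deriv f x)) x :=
          hc.congr_of_eventuallyEq hev
        rw [this.deriv]
        exact mul_ne_zero ((isDiffeo_invFun hg₁d).deriv_ne_zero _)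
          (mul_ne_zero (hh₂.deriv_ne_zero _) (hf.deriv_ne_zero _))
      · subst hx
        have hH1 : HasDerivWithinAt H (deriv H 0) (Ici 0) 0 :=
          ((hHsmooth.differentiable inf_pos' 0).hasDerivAt).hasDerivWithinAt
        have hH2 : HasDerivWithinAt H (deriv h₂ 0) (Ici 0) 0 := by
          apply ((hh₂.diffble 0).hasDerivAt).hasDerivWithinAt.congr
          · intro y hy; exact Hge y (mem_Ici.1 hy)
          · exact Hge 0 le_rfl
        have hu : UniqueDiffWithinAt ℝ (Ici (0:ℝ)) 0 := uniqueDiffOn_Ici 0 0 (mem_Ici.2 le_rfl)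
        have := (hH1.derivWithin hu).symm.trans (hH2.derivWithin hu)
        rw [this]
        exact hh₂.deriv_ne_zero 0
      · have hev : H =ᶠ[nhds x] h₂ := by
          filter_upwards [Ioi_mem_nhds hx] with y hy
          exact Hpos y (not_le.2 (mem_Ioi.1 hy))
        rw [Filter.EventuallyEq.deriv_eq hev]
        exact hh₂.deriv_ne_zero x
    have hHdiffeo : IsDiffeo H := ⟨hHbij, hHsmooth, contDiff_invFun hHsmooth hHbij hHd⟩
    have hconj : ∀ x, H (f x) = g₁ (H x) := by
      intro x
      rcases lt_trichotomy x 0 with hx | hx | hx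
      · have hfx : 0 < f x := by rw [← hf0]; exact hfa hx
        rw [Hge _ (le_of_lt hfx), Hneg _ (le_of_lt hx), hg₁d.rightInv]
      · subst hx
        rw [hf0, H0, hg₁0]
      · have hfx : f x < 0 := by rw [← hf0]; exact hfa hx
        rw [Hneg _ (le_of_lt hfx), Hpos _ (not_le.2 hx)]
        have hcx := congrFun hcomm x
        simp only [Function.comp_apply] at hcx
        rw [hcx, hffgg, hg₁d.leftInv]
    refine ⟨h₁ ∘ H, ?_, hm₁.comp hHm, ?_⟩
    · refine ⟨hh₁.1.comp hHbij, hh₁.2.1.comp hHsmooth, ?_⟩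
      have : Function.invFun (h₁ ∘ H) = Function.invFun H ∘ Function.invFun h₁ := by
        apply Function.invFun_eq_of_injective_of_rightInverse
          ((hh₁.1.comp hHbij).1)
        intro x
        simp only [Function.comp_apply]
        rw [hHdiffeo.rightInv, hh₁.rightInv]
      rw [this]
      exact hHdiffeo.2.2.comp hh₁.2.2
    · funext x
      have key : g (h₁ (H x)) = h₁ (H (f x)) := by
        have := hconj x
        rw [this]
        simp only [hg₁def, Function.comp_apply]
        rw [hh₁.rightInv]
      simp only [Function.comp_apply]
      rw [key]
      exact (Function.leftInverse_invFun (hh₁.1.comp hHbij).1 (f x)).symm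
end
end

section
/- Let τ be a proper involution in Diffeo, i.e. a C^∞ diffeomorphism of ℝ with τ∘τ = id and τ ≠ id. Then there exists an orientation-preserving C^∞ diffeomorphism ψ of ℝ such that ψ⁻¹ ∘ (−id) ∘ ψ = τ, i.e. τ is conjugated to the map x ↦ −x by an element of Diffeo⁺. -/
open Function Filter

/-- If `ψ` is a smooth bijection of ℝ with nowhere-vanishing derivative, then its
inverse is smooth. -/
lemma contDiff_invFun_of_deriv_ne_zero {ψ : ℝ → ℝ} (hb : Function.Bijective ψ)
    (hs : ContDiff ℝ (⊤ : ℕ∞) ψ) (hd : ∀ x, deriv ψ x ≠ 0) :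
    ContDiff ℝ (⊤ : ℕ∞) (Function.invFun ψ) := by
  have hn : (1 : ℕ∞) ≤ (⊤ : ℕ∞) := le_top
  rw [contDiff_iff_contDiffAt]
  intro y
  obtain ⟨x, rfl⟩ := hb.2 y
  have hψx : HasDerivAt ψ (deriv ψ x) x :=
    ((hs.differentiable (by simp)) x).hasDerivAt
  set e : ℝ ≃L[ℝ] ℝ := ContinuousLinearEquiv.unitsEquivAut ℝ (Units.mk0 _ (hd x)) with he
  have hF : HasFDerivAt ψ (e : ℝ →L[ℝ] ℝ) x := by
    have h := hψx.hasFDerivAt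
    refine h.congr_fderiv ?_
    ext; simp [he]
  have hca : ContDiffAt ℝ (⊤ : ℕ∞) ψ x := hs.contDiffAt
  have hn' : ((⊤ : ℕ∞) : WithTop ℕ∞) ≠ 0 := by simp
  have hli := hca.to_localInverse (f' := e) hF hn'
  have heq : hca.localInverse hF hn' =ᶠ[nhds (ψ x)] Function.invFun ψ := by
    have h1 : ∀ᶠ y in nhds (ψ x), ψ (hca.localInverse hF hn' y) = y :=
      (hca.hasStrictFDerivAt' hF hn').eventually_right_inverse
    refine h1.mono fun y hy => ?_
    have h2 : ψ (Function.invFun ψ y) = y := Function.rightInverse_invFun hb.2 y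
    exact hb.1 (hy.trans h2.symm)
  exact hli.congr_of_eventuallyEq heq.symm

theorem proper_involution_conjugate_to_neg
    (τ : ℝ → ℝ) (hτ : IsDiffeo τ) (hinv : τ ∘ τ = id) (hne : τ ≠ id) :
    ∃ ψ : ℝ → ℝ, IsDiffeo ψ ∧ StrictMono ψ ∧
      Function.invFun ψ ∘ (fun x : ℝ => -x) ∘ ψ = τ := by
  obtain ⟨hbij, hs, -⟩ := hτ
  have hdiff : Differentiable ℝ τ := hs.differentiable (by simp)
  have hττ : ∀ x, τ (τ x) = x := fun x => congrFun hinv x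
  -- chain rule: deriv τ (τ x) * deriv τ x = 1
  have hchain : ∀ x, deriv τ (τ x) * deriv τ x = 1 := by
    intro x
    have h1 : HasDerivAt (τ ∘ τ) (deriv τ (τ x) * deriv τ x) x :=
      (hdiff (τ x)).hasDerivAt.comp x (hdiff x).hasDerivAt
    have h2 : HasDerivAt (τ ∘ τ) 1 x := by
      rw [hinv]; exact hasDerivAt_id x
    exact h1.unique h2
  have hne0 : ∀ x, deriv τ x ≠ 0 := by
    intro x hx
    have := hchain x
    rw [hx, mul_zero] at this
    exact zero_ne_one this
  have hcont : Continuous (deriv τ) := hs.continuous_deriv (mod_cast le_top)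
  -- the derivative is everywhere negative
  have hneg : ∀ x, deriv τ x < 0 := by
    by_contra h
    push_neg at h
    obtain ⟨a, ha⟩ := h
    have ha' : 0 < deriv τ a := lt_of_le_of_ne ha (Ne.symm (hne0 a))
    have hall : ∀ x, 0 < deriv τ x := by
      intro b
      rcases lt_or_gt_of_ne (hne0 b) with hb | hb
      · exfalso
        have h0 : (0 : ℝ) ∈ Set.uIcc (deriv τ a) (deriv τ b) :=
          Set.mem_uIcc.2 (Or.inr ⟨hb.le, ha'.le⟩)
        obtain ⟨c, -, hc⟩ := intermediate_value_uIcc (hcont.continuousOn (s := Set.uIcc a b)) h0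
        exact hne0 c hc
      · exact hb
    have hmono : StrictMono τ := strictMono_of_deriv_pos hall
    apply hne
    funext x
    rcases lt_trichotomy (τ x) x with h | h | h
    · have := hmono h; rw [hττ] at this; exact absurd (this.trans h) (lt_irrefl _)
    · exact h
    · have := hmono h; rw [hττ] at this; exact absurd (h.trans this) (lt_irrefl _)
  -- conjugating map
  set ψ : ℝ → ℝ := fun x => (x - τ x) / 2 with hψdef
  have hψs : ContDiff ℝ (⊤ : ℕ∞) ψ := (contDiff_id.sub hs).div_const 2
  have hψD : ∀ x, HasDerivAt ψ ((1 - deriv τ x) / 2) x := fun x =>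
    ((hasDerivAt_id x).sub (hdiff x).hasDerivAt).div_const 2
  have hψderiv : ∀ x, deriv ψ x = (1 - deriv τ x) / 2 := fun x => (hψD x).deriv
  have hψdiff : Differentiable ℝ ψ := fun x => (hψD x).differentiableAt
  have hψbd : ∀ x, (1 : ℝ) / 2 ≤ deriv ψ x := by
    intro x; rw [hψderiv x]; nlinarith [hneg x]
  have hψpos : ∀ x, 0 < deriv ψ x := fun x => lt_of_lt_of_le (by norm_num) (hψbd x)
  have hmono : StrictMono ψ := strictMono_of_deriv_pos hψpos
  -- surjectivity
  have hbound : ∀ x y : ℝ, x ≤ y → (1 : ℝ) / 2 * (y - x) ≤ ψ y - ψ x := fun x y hxy =>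
    mul_sub_le_image_sub_of_le_deriv hψdiff hψbd hxy
  have htop : Tendsto ψ atTop atTop := by
    apply tendsto_atTop_mono' _ (Filter.eventually_atTop.2 ⟨0, fun x hx => ?_⟩)
    · exact tendsto_atTop_add_const_left _ (ψ 0) (tendsto_id.atTop_div_const two_pos)
    · have := hbound 0 x hx; simp only [id_eq]; linarith
  have hbot : Tendsto ψ atBot atBot := by
    apply tendsto_atBot_mono' _ (Filter.eventually_atBot.2 ⟨0, fun x hx => ?_⟩)
    · exact tendsto_atBot_add_const_left _ (ψ 0) (tendsto_id.atBot_div_const two_pos)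
    · have := hbound x 0 hx; simp only [id_eq]; linarith
  have hψbij : Function.Bijective ψ :=
    ⟨hmono.injective, hψs.continuous.surjective htop hbot⟩
  have hψinv : ContDiff ℝ (⊤ : ℕ∞) (Function.invFun ψ) :=
    contDiff_invFun_of_deriv_ne_zero hψbij hψs fun x => (hψpos x).ne'
  refine ⟨ψ, ⟨hψbij, hψs, hψinv⟩, hmono, ?_⟩
  funext x
  have key : ψ (τ x) = -ψ x := by
    simp only [hψdef, hττ x]; ring
  have : Function.invFun ψ (ψ (τ x)) = τ x := Function.leftInverse_invFun hψbij.1 _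
  simpa [key] using this
end

section
/- Any two proper involutions in Diffeo are conjugate: if τ₁ and τ₂ are C^∞ diffeomorphisms of ℝ with τ₁∘τ₁ = id, τ₂∘τ₂ = id, τ₁ ≠ id and τ₂ ≠ id, then there exists a C^∞ diffeomorphism h of ℝ with τ₁ = h⁻¹ ∘ τ₂ ∘ h. -/
open Function Filter Topology

lemma invol_strictAnti {τ : ℝ → ℝ} (hb : Function.Bijective τ) (hc : Continuous τ)
    (hi : τ ∘ τ = id) (hn : τ ≠ id) : StrictAnti τ := by
  rcases hc.strictMono_of_inj hb.1 with hm | ha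
  · exfalso
    apply hn
    funext x
    have hfix : τ (τ x) = x := congrFun hi x
    rcases lt_trichotomy (τ x) x with h | h | h
    · have := hm h
      rw [hfix] at this
      exact absurd this (not_lt_of_gt h)
    · exact h
    · have := hm h
      rw [hfix] at this
      exact absurd this (not_lt_of_gt h)
  · exact ha

lemma antitone_deriv_nonpos {τ : ℝ → ℝ} (ha : Antitone τ) {c x : ℝ}
    (hd : HasDerivAt τ c x) : c ≤ 0 := by
  have ht : Tendsto (slope τ x) (𝓝[>] x) (𝓝 c) :=
    (hasDerivAt_iff_tendsto_slope.1 hd).mono_left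
      (nhdsWithin_mono x fun y hy => ne_of_gt hy)
  refine le_of_tendsto ht ?_
  filter_upwards [self_mem_nhdsWithin] with y hy
  have hxy : x < y := hy
  have : τ y ≤ τ x := ha hxy.le
  rw [slope_def_field]
  exact div_nonpos_of_nonpos_of_nonneg (by linarith) (by linarith)

/-- Every proper smooth involution is smoothly conjugate to negation. -/
lemma conj_to_neg {τ : ℝ → ℝ} (hτ : IsDiffeo τ) (hi : τ ∘ τ = id) (hn : τ ≠ id) :
    ∃ h : ℝ → ℝ, IsDiffeo h ∧ ∀ x, h (τ x) = - h x := by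
  obtain ⟨hb, hs, _⟩ := hτ
  have ha : StrictAnti τ := invol_strictAnti hb (hs.continuous) hi hn
  set h : ℝ → ℝ := fun x => x - τ x with hh
  have hdiff : ContDiff ℝ (⊤ : ℕ∞) h := contDiff_id.sub hs
  have hmono : StrictMono h := by
    intro a b hab
    have := ha hab
    simp only [hh]
    linarith
  have h1t : (1 : ℕ∞) ≤ (⊤ : ℕ∞) := le_top
  have hder : ∀ x, HasDerivAt h (1 - deriv τ x) x := fun x =>
    (hasDerivAt_id x).sub ((hs.differentiable (by simp) x).hasDerivAt)
  have hderpos : ∀ x, 0 < 1 - deriv τ x := by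
    intro x
    have : deriv τ x ≤ 0 :=
      antitone_deriv_nonpos ha.antitone ((hs.differentiable (by simp) x).hasDerivAt)
    linarith
  -- surjectivity
  have htop : Tendsto h atTop atTop := by
    refine tendsto_atTop_mono' atTop ?_ (tendsto_atTop_add_const_right atTop (-τ 0) tendsto_id)
    filter_upwards [eventually_ge_atTop (0 : ℝ)] with x hx
    have : τ x ≤ τ 0 := ha.antitone hx
    simp only [hh, id_eq]
    linarith
  have hbot : Tendsto h atBot atBot := by
    refine tendsto_atBot_mono' atBot ?_ (tendsto_atBot_add_const_right atBot (-τ 0) tendsto_id)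
    filter_upwards [eventually_le_atBot (0 : ℝ)] with x hx
    have : τ 0 ≤ τ x := ha.antitone hx
    simp only [hh, id_eq]
    linarith
  have hsurj : Function.Surjective h := hdiff.continuous.surjective htop hbot
  have hbij : Function.Bijective h := ⟨hmono.injective, hsurj⟩
  -- smooth inverse
  have hinv : ContDiff ℝ (⊤ : ℕ∞) (Function.invFun h) := by
    rw [contDiff_iff_contDiffAt]
    intro y
    obtain ⟨x, rfl⟩ := hsurj y
    have hca : ContDiffAt ℝ (⊤ : ℕ∞) h x := hdiff.contDiffAt
    have hle : ((⊤ : ℕ∞) : WithTop ℕ∞) ≠ 0 := by simp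
    set c : ℝ := 1 - deriv τ x with hc
    have hc0 : c ≠ 0 := ne_of_gt (hderpos x)
    set e : ℝ ≃L[ℝ] ℝ := ContinuousLinearEquiv.unitsEquivAut ℝ (Units.mk0 c hc0) with he
    have hfd : HasFDerivAt h (e : ℝ →L[ℝ] ℝ) x := by
      have h1 := (hder x).hasFDerivAt
      have heq : (e : ℝ →L[ℝ] ℝ) = ContinuousLinearMap.smulRight (1 : ℝ →L[ℝ] ℝ) c := by
        ext
        simp [he, ContinuousLinearEquiv.unitsEquivAut, mul_comm]
      rw [heq]
      exact h1
    have hloc : ContDiffAt ℝ (⊤ : ℕ∞) (hca.localInverse hfd hle) (h x) :=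
      hca.to_localInverse hfd hle
    refine hloc.congr_of_eventuallyEq ?_
    have hev : ∀ᶠ z in 𝓝 (h x), h (hca.localInverse hfd hle z) = z :=
      (hca.hasStrictFDerivAt' hfd hle).eventually_right_inverse
    filter_upwards [hev] with z hz
    apply hmono.injective
    rw [hz, Function.invFun_eq (hsurj z)]
  refine ⟨h, ⟨hbij, hdiff, hinv⟩, fun x => ?_⟩
  have hfix : τ (τ x) = x := congrFun hi x
  simp only [hh, hfix]
  ring

theorem proper_involutions_conjugate
    (τ₁ τ₂ : ℝ → ℝ) (hτ₁ : IsDiffeo τ₁) (hτ₂ : IsDiffeo τ₂)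
    (hi₁ : τ₁ ∘ τ₁ = id) (hi₂ : τ₂ ∘ τ₂ = id)
    (hn₁ : τ₁ ≠ id) (hn₂ : τ₂ ≠ id) :
    ∃ h : ℝ → ℝ, IsDiffeo h ∧ τ₁ = Function.invFun h ∘ τ₂ ∘ h := by
  obtain ⟨h₁, ⟨hb₁, hs₁, hs₁'⟩, hc₁⟩ := conj_to_neg hτ₁ hi₁ hn₁
  obtain ⟨h₂, ⟨hb₂, hs₂, hs₂'⟩, hc₂⟩ := conj_to_neg hτ₂ hi₂ hn₂
  have hli₁ : ∀ x, Function.invFun h₁ (h₁ x) = x := fun x => Function.leftInverse_invFun hb₁.1 x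
  have hri₁ : ∀ y, h₁ (Function.invFun h₁ y) = y := fun y => Function.invFun_eq (hb₁.2 y)
  have hli₂ : ∀ x, Function.invFun h₂ (h₂ x) = x := fun x => Function.leftInverse_invFun hb₂.1 x
  have hri₂ : ∀ y, h₂ (Function.invFun h₂ y) = y := fun y => Function.invFun_eq (hb₂.2 y)
  set g : ℝ → ℝ := Function.invFun h₂ ∘ h₁ with hg
  have hgbij : Function.Bijective g := by
    constructor
    · intro a b hab
      have : h₂ (Function.invFun h₂ (h₁ a)) = h₂ (Function.invFun h₂ (h₁ b)) := congrArg h₂ hab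
      rw [hri₂, hri₂] at this
      exact hb₁.1 this
    · intro y
      refine ⟨Function.invFun h₁ (h₂ y), ?_⟩
      show Function.invFun h₂ (h₁ (Function.invFun h₁ (h₂ y))) = y
      rw [hri₁, hli₂]
  have hginv : Function.invFun g = Function.invFun h₁ ∘ h₂ := by
    funext y
    apply hgbij.1
    rw [Function.invFun_eq (hgbij.2 y)]
    show y = Function.invFun h₂ (h₁ (Function.invFun h₁ (h₂ y)))
    rw [hri₁, hli₂]
  refine ⟨g, ⟨hgbij, hs₂'.comp hs₁, by rw [hginv]; exact hs₁'.comp hs₂⟩, ?_⟩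
  funext x
  rw [hginv]
  simp only [Function.comp_apply, hginv, hg]
  apply hb₁.1
  rw [hri₁]
  have : h₂ (τ₂ (Function.invFun h₂ (h₁ x))) = - h₂ (Function.invFun h₂ (h₁ x)) :=
    hc₂ _
  rw [this, hri₂, ← hc₁]
end

section
/- Let τ be a proper involution in Diffeo (τ∘τ = id, τ ≠ id), and define ψ(x) = (x − τ(x))/2 for x ∈ ℝ. Then ψ is an orientation-preserving (strictly increasing) C^∞ diffeomorphism of ℝ and ψ(τ(x)) = −ψ(x) for every x ∈ ℝ. -/
theorem involution_linearizer
    (τ : ℝ → ℝ) (hτ : IsDiffeo τ) (hinv : τ ∘ τ = id) (hne : τ ≠ id)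
    (ψ : ℝ → ℝ) (hψ : ∀ x : ℝ, ψ x = (x - τ x) / 2) :
    IsDiffeo ψ ∧ StrictMono ψ ∧ ∀ x : ℝ, ψ (τ x) = -ψ x := by
  obtain ⟨⟨τinj, τsurj⟩, τsm, τinvsm⟩ := hτ
  have hττ : ∀ x, τ (τ x) = x := fun x => congrFun hinv x
  -- τ is strictly antitone
  have hanti : StrictAnti τ := by
    rcases τsm.continuous.strictMono_of_inj τinj with h | h
    · exfalso; apply hne; funext x
      by_contra hx
      rcases lt_or_gt_of_ne hx with h1 | h1
      · have h2 := h h1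
        rw [hττ] at h2
        exact absurd (h2.trans h1) (lt_irrefl _)
      · have h2 := h h1
        rw [hττ] at h2
        exact absurd (h1.trans h2) (lt_irrefl _)
    · exact h
  have τdiff : Differentiable ℝ τ := τsm.differentiable (by simp)
  -- deriv τ is nonpositive
  have hderivτ : ∀ x, deriv τ x ≤ 0 := by
    intro x
    have hs := hasDerivAt_iff_tendsto_slope.1 (τdiff x).hasDerivAt
    refine le_of_tendsto hs ?_
    filter_upwards [self_mem_nhdsWithin] with y hy
    rw [slope_def_field, div_eq_mul_inv]
    rcases lt_or_gt_of_ne (Ne.symm hy) with h | h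
    · -- x < y, so τ y < τ x
      exact mul_nonpos_of_nonpos_of_nonneg (by linarith [hanti h]) (inv_nonneg.2 (by linarith))
    · -- y < x, so τ x < τ y
      exact mul_nonpos_of_nonneg_of_nonpos (by linarith [hanti h])
        (by rw [inv_nonpos]; linarith)
  -- ψ is smooth
  have hψeq : ψ = fun x => (x - τ x) / 2 := funext hψ
  have ψsm : ContDiff ℝ (⊤ : ℕ∞) ψ := by
    rw [hψeq]; exact (contDiff_id.sub τsm).div_const 2
  -- ψ is strictly monotone
  have ψmono : StrictMono ψ := by
    intro a b hab
    rw [hψ, hψ]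
    have := hanti hab
    linarith
  have ψinj : Function.Injective ψ := ψmono.injective
  -- ψ is surjective
  have ψsurj : Function.Surjective ψ := by
    apply ψsm.continuous.surjective
    · apply Filter.tendsto_atTop_mono' _ _
        ((Filter.tendsto_atTop_add_const_right Filter.atTop (-τ 0) Filter.tendsto_id).atTop_div_const
          (by norm_num : (0:ℝ) < 2))
      filter_upwards [Filter.eventually_ge_atTop (0:ℝ)] with x hx
      have : τ x ≤ τ 0 := hanti.antitone hx
      rw [hψ]
      apply div_le_div_of_nonneg_right ?_ (by norm_num)
      simp only [id]
      linarith
    · apply Filter.tendsto_atBot_mono' _ _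
        ((Filter.tendsto_atBot_add_const_right Filter.atBot (-τ 0) Filter.tendsto_id).atBot_div_const
          (by norm_num : (0:ℝ) < 2))
      filter_upwards [Filter.eventually_le_atBot (0:ℝ)] with x hx
      have : τ 0 ≤ τ x := hanti.antitone hx
      rw [hψ]
      apply div_le_div_of_nonneg_right ?_ (by norm_num)
      simp only [id]
      linarith
  -- derivative of ψ
  have hders : ∀ x, HasDerivAt ψ ((1 - deriv τ x) / 2) x := by
    intro x
    rw [hψeq]
    exact ((hasDerivAt_id x).sub (τdiff x).hasDerivAt).div_const 2
  have hdpos : ∀ x, (0:ℝ) < (1 - deriv τ x) / 2 := fun x => by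
    have := hderivτ x; linarith
  -- inverse is smooth
  have hinvsm : ContDiff ℝ (⊤ : ℕ∞) (Function.invFun ψ) := by
    rw [contDiff_iff_contDiffAt]
    intro y
    obtain ⟨x, rfl⟩ := ψsurj y
    set d := (1 - deriv τ x) / 2 with hd
    have hd0 : d ≠ 0 := ne_of_gt (hdpos x)
    set e : ℝ ≃L[ℝ] ℝ := ContinuousLinearEquiv.unitsEquivAut ℝ (Units.mk0 d hd0) with he
    have hfd : HasFDerivAt ψ (e : ℝ →L[ℝ] ℝ) x := by
      have h1 := (hders x).hasFDerivAt
      exact h1.congr_fderiv (by ext; simp [he, hd])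
    have hca : ContDiffAt ℝ (⊤ : ℕ∞) ψ x := ψsm.contDiffAt
    have hlocal := hca.to_localInverse (f' := e) hfd (by simp)
    apply hlocal.congr_of_eventuallyEq
    have hev := (hca.hasStrictFDerivAt' hfd (by simp)).eventually_right_inverse
    filter_upwards [hev] with z hz
    apply ψinj
    rw [Function.rightInverse_invFun ψsurj z]
    exact hz.symm
  refine ⟨⟨⟨ψinj, ψsurj⟩, ψsm, hinvsm⟩, ψmono, ?_⟩
  intro x
  rw [hψ, hψ, hττ]
  ring
end

section
/- Let f and g be orientation-reversing C^∞ diffeomorphisms of ℝ fixing 0 with f∘f = g∘g, and suppose (T_0 f)^∘2 ≠ X, i.e. there exists n ≥ 1 such that the n-th derivative of f∘f at 0 differs from the n-th derivative of the identity at 0. Then T_0 f = T_0 g, i.e. the n-th derivatives of f and g at 0 agree for every n ≥ 1. -/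
open Filter Topology Asymptotics Set

lemma myMVT {ψ : ℝ → ℝ} (hψ : Differentiable ℝ ψ) (x y K : ℝ)
    (hb : ∀ t ∈ uIcc x y, |deriv ψ t| ≤ K) : |ψ y - ψ x| ≤ K * |y - x| := by
  have := Convex.norm_image_sub_le_of_norm_deriv_le (f := ψ) (s := uIcc x y)
    (fun t _ => hψ t) (fun t ht => hb t ht) (convex_uIcc x y) left_mem_uIcc right_mem_uIcc
  simpa [Real.norm_eq_abs] using this

lemma coeff_zero {c : ℝ} {K : ℕ}
    (h : (fun x : ℝ => c * x ^ K) =o[𝓝 0] (fun x => x ^ K)) : c = 0 := by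
  by_contra hc
  have hε : (0:ℝ) < |c| / 2 := by positivity
  have h2 := (h.def hε)
  have h3 := ((eventually_nhdsWithin_of_eventually_nhds (s := {(0:ℝ)}ᶜ) h2).and
    self_mem_nhdsWithin).exists
  obtain ⟨x, hx1, hx2⟩ := h3
  have hx0 : x ≠ 0 := hx2
  have hpow : (0:ℝ) < |x ^ K| := by positivity
  rw [Real.norm_eq_abs, Real.norm_eq_abs, abs_mul] at hx1
  nlinarith [abs_nonneg c]

lemma littleO_step {r : ℝ → ℝ} (hd : Differentiable ℝ r) (h0 : r 0 = 0) {n : ℕ}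
    (h : (deriv r) =o[𝓝 0] fun x => x ^ n) : r =o[𝓝 0] fun x : ℝ => x ^ (n + 1) := by
  rw [isLittleO_iff] at h ⊢
  intro ε hε
  obtain ⟨δ, hδ, hb⟩ := Metric.eventually_nhds_iff.mp (h hε)
  rw [Metric.eventually_nhds_iff]
  refine ⟨δ, hδ, fun x hx => ?_⟩
  have hxd : |x| < δ := by simpa [Real.dist_eq] using hx
  have key : ∀ t ∈ uIcc 0 x, |deriv r t| ≤ ε * |x| ^ n := by
    intro t ht
    have htx : |t| ≤ |x| := by
      rcases le_total 0 x with hx0 | hx0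
      · rw [uIcc_of_le (by linarith)] at ht
        rw [abs_of_nonneg ht.1, abs_of_nonneg hx0]; exact ht.2
      · rw [uIcc_of_ge (by linarith)] at ht
        rw [abs_of_nonpos ht.2, abs_of_nonpos hx0]; linarith [ht.1]
    have hbd := hb (y := t) (by simpa [Real.dist_eq] using lt_of_le_of_lt htx hxd)
    rw [Real.norm_eq_abs, Real.norm_eq_abs, abs_pow] at hbd
    exact hbd.trans (by gcongr)
  have hm := myMVT hd 0 x (ε * |x| ^ n) key
  rw [h0, sub_zero, sub_zero] at hm
  calc ‖r x‖ = |r x| := rfl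
    _ ≤ ε * |x| ^ n * |x| := hm
    _ = ε * ‖x ^ (n+1)‖ := by rw [Real.norm_eq_abs, abs_pow, pow_succ]; ring

lemma peano {h : ℝ → ℝ} (hs : ContDiff ℝ (⊤:ℕ∞) h) (n : ℕ)
    (hv : ∀ k < n, iteratedDeriv k h 0 = 0) :
    (fun x => h x - (iteratedDeriv n h 0 / n.factorial) * x ^ n) =o[𝓝 0]
      fun x : ℝ => x ^ n := by
  induction n generalizing h with
  | zero =>
    simp only [pow_zero, Nat.factorial_zero, Nat.cast_one, div_one, mul_one, iteratedDeriv_zero]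
    rw [isLittleO_one_iff]
    have := (hs.continuous.tendsto 0).sub (tendsto_const_nhds (x := h 0))
    simpa using this
  | succ n IH =>
    have hd' : ContDiff ℝ (⊤:ℕ∞) (deriv h) := (contDiff_infty_iff_deriv.mp hs).2
    have hv' : ∀ k < n, iteratedDeriv k (deriv h) 0 = 0 := fun k hk => by
      have := hv (k+1) (by omega)
      rwa [iteratedDeriv_succ'] at this
    have IH' := IH hd' hv'
    set c : ℝ := iteratedDeriv (n+1) h 0 / (n+1).factorial with hc
    have hdh : Differentiable ℝ h := hs.differentiable (by norm_num)
    have hr0 : h 0 - c * 0 ^ (n+1) = 0 := by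
      have := hv 0 (by omega)
      rw [iteratedDeriv_zero] at this
      simp [this]
    have hder : deriv (fun x => h x - c * x ^ (n+1)) =
        fun x => deriv h x - iteratedDeriv n (deriv h) 0 / n.factorial * x ^ n := by
      funext x
      rw [deriv_fun_sub (hdh x) (by fun_prop)]
      have : deriv (fun x : ℝ => c * x ^ (n+1)) x = c * ((n+1) * x ^ n) := by
        rw [deriv_const_mul _ (by fun_prop)]
        simp [deriv_pow]
      rw [this, ← iteratedDeriv_succ']
      have hfac : ((n+1).factorial : ℝ) = (n+1) * n.factorial := by
        rw [Nat.factorial_succ]; push_cast; ring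
      have : c * ((n:ℝ)+1) = iteratedDeriv (n+1) h 0 / n.factorial := by
        rw [hc, hfac]
        field_simp
      rw [show ((n:ℝ)+1) * x ^ n = (((n:ℝ)+1)) * x^n from rfl, show c * (((n:ℝ)+1) * x ^ n)
        = (c * ((n:ℝ)+1)) * x ^ n by ring, this]
    exact littleO_step (r := fun x => h x - c * x ^ (n+1)) (hdh.sub (by fun_prop)) hr0 (by rw [hder]; exact IH')

lemma mem_uIcc_abs_le {t a b : ℝ} (ht : t ∈ uIcc a b) : |t| ≤ max |a| |b| := by
  rw [Set.mem_uIcc] at ht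
  rcases ht with ⟨h1, h2⟩ | ⟨h1, h2⟩ <;>
    refine abs_le.mpr ⟨?_, ?_⟩ <;>
    [skip; skip; skip; skip] <;>
    first
    | linarith [le_abs_self b, neg_abs_le a, le_max_left |a| |b|, le_max_right |a| |b|]
    | linarith [le_abs_self a, neg_abs_le b, le_max_left |a| |b|, le_max_right |a| |b|]

lemma mem_uIcc_abs_sub_le {t a b : ℝ} (ht : t ∈ uIcc a b) : |t - a| ≤ |b - a| := by
  rw [Set.mem_uIcc] at ht
  rcases ht with ⟨h1, h2⟩ | ⟨h1, h2⟩ <;>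
    refine abs_le.mpr ⟨?_, ?_⟩ <;>
    linarith [le_abs_self (b - a), neg_abs_le (b - a)]

lemma squeeze1 {φ u v w : ℝ → ℝ} (hφ : ContDiff ℝ (⊤:ℕ∞) φ) (hφ0 : deriv φ 0 = 0)
    (hu : Tendsto u (𝓝 0) (𝓝 0)) (hv : Tendsto v (𝓝 0) (𝓝 0))
    (huv : (fun x => u x - v x) =O[𝓝 0] w) :
    (fun x => φ (u x) - φ (v x)) =o[𝓝 0] w := by
  obtain ⟨C, hC, hCb⟩ := huv.exists_pos
  rw [IsBigOWith] at hCb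
  have hφd : Differentiable ℝ φ := hφ.differentiable (by norm_num)
  have hφ' : Continuous (deriv φ) := ((contDiff_infty_iff_deriv.mp hφ).2).continuous
  rw [isLittleO_iff]
  intro ε hε
  have hεC : (0:ℝ) < ε / C := by positivity
  obtain ⟨r, hr, hrb⟩ := Metric.continuousAt_iff.mp (hφ'.continuousAt (x := 0)) (ε / C) hεC
  have hev : ∀ᶠ x in 𝓝 0, dist (u x) 0 < r ∧ dist (v x) 0 < r :=
    ((hu.eventually (Metric.ball_mem_nhds 0 hr)).and
      (hv.eventually (Metric.ball_mem_nhds 0 hr)))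
  filter_upwards [hev, hCb] with x hx hb
  have key : ∀ t ∈ uIcc (v x) (u x), |deriv φ t| ≤ ε / C := by
    intro t ht
    have h1 : |t| ≤ max |v x| |u x| := mem_uIcc_abs_le ht
    have h2 : dist t 0 < r := by
      rw [Real.dist_eq, sub_zero]
      simp only [Real.dist_eq, sub_zero] at hx
      exact lt_of_le_of_lt h1 (max_lt hx.2 hx.1)
    have := hrb h2
    rw [hφ0, dist_zero_right, Real.norm_eq_abs] at this
    exact this.le
  have hm := myMVT hφd (v x) (u x) (ε / C) key
  rw [Real.norm_eq_abs]
  calc |φ (u x) - φ (v x)| ≤ ε / C * |u x - v x| := hm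
    _ ≤ ε / C * (C * ‖w x‖) := by
        apply mul_le_mul_of_nonneg_left _ (le_of_lt hεC)
        simpa [Real.norm_eq_abs] using hb
    _ = ε * ‖w x‖ := by field_simp

lemma squeeze2 {G u v : ℝ → ℝ} {p q : ℕ} (hG : ContDiff ℝ (⊤:ℕ∞) G)
    (hη : (deriv (deriv G)) =O[𝓝 0] fun x : ℝ => x ^ p)
    (hu : u =O[𝓝 0] fun x : ℝ => x) (hv : v =O[𝓝 0] fun x : ℝ => x)
    (huv : (fun x => u x - v x) =O[𝓝 0] fun x : ℝ => x ^ q) :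
    (fun x => G (u x) - G (v x) - deriv G (v x) * (u x - v x)) =O[𝓝 0]
      fun x : ℝ => x ^ (p + 2*q) := by
  have hGd : Differentiable ℝ G := hG.differentiable (by norm_num)
  have hG'c : ContDiff ℝ (⊤:ℕ∞) (deriv G) := (contDiff_infty_iff_deriv.mp hG).2
  have hG'd : Differentiable ℝ (deriv G) := hG'c.differentiable (by norm_num)
  obtain ⟨C1, hC1, hC1b⟩ := hη.exists_pos
  rw [IsBigOWith] at hC1b
  obtain ⟨r, hr, hrb⟩ := Metric.eventually_nhds_iff.mp hC1b
  obtain ⟨C2, hC2, hC2b⟩ := hu.exists_pos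
  rw [IsBigOWith] at hC2b
  obtain ⟨C2', hC2', hC2b'⟩ := hv.exists_pos
  rw [IsBigOWith] at hC2b'
  obtain ⟨C3, hC3, hC3b⟩ := huv.exists_pos
  rw [IsBigOWith] at hC3b
  set C4 := max C2 C2' with hC4
  have hC4p : (0:ℝ) < C4 := lt_max_of_lt_left hC2
  rw [isBigO_iff]
  refine ⟨C1 * C4 ^ p * C3 * C3, ?_⟩
  have hsmall : ∀ᶠ x : ℝ in 𝓝 0, C4 * |x| < r := by
    have : Tendsto (fun x : ℝ => C4 * |x|) (𝓝 0) (𝓝 0) := by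
      simpa using (continuous_abs.tendsto (0:ℝ)).const_mul C4
    exact this.eventually_lt_const hr
  filter_upwards [hC2b, hC2b', hC3b, hsmall] with x h2 h2' h3 hsm
  simp only [Real.norm_eq_abs, abs_pow] at h2 h2' h3 ⊢
  set K0 : ℝ := C1 * (C4 * |x|) ^ p with hK0
  have hK0nn : 0 ≤ K0 := by positivity
  have habs : max |v x| |u x| ≤ C4 * |x| := by
    apply max_le
    · calc |v x| ≤ C2' * |x| := h2'
        _ ≤ C4 * |x| := by gcongr; exact le_max_right _ _
    · calc |u x| ≤ C2 * |x| := h2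
        _ ≤ C4 * |x| := by gcongr; exact le_max_left _ _
  have hstep1 : ∀ t ∈ uIcc (v x) (u x), |deriv (deriv G) t| ≤ K0 := by
    intro t ht
    have h1 : |t| ≤ C4 * |x| := (mem_uIcc_abs_le ht).trans habs
    have hdist : dist t 0 < r := by rw [Real.dist_eq, sub_zero]; exact lt_of_le_of_lt h1 hsm
    have := hrb hdist
    simp only [Real.norm_eq_abs, abs_pow] at this
    calc |deriv (deriv G) t| ≤ C1 * |t| ^ p := this
      _ ≤ K0 := by rw [hK0]; gcongr
  have hstep2 : ∀ t ∈ uIcc (v x) (u x),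
      |deriv G t - deriv G (v x)| ≤ K0 * |u x - v x| := by
    intro t ht
    have hsub : uIcc (v x) t ⊆ uIcc (v x) (u x) := uIcc_subset_uIcc left_mem_uIcc ht
    have := myMVT hG'd (v x) t K0 (fun s hs => hstep1 s (hsub hs))
    calc |deriv G t - deriv G (v x)| ≤ K0 * |t - v x| := this
      _ ≤ K0 * |u x - v x| := by
          apply mul_le_mul_of_nonneg_left (mem_uIcc_abs_sub_le ht) hK0nn
  set χ : ℝ → ℝ := fun t => G t - deriv G (v x) * t with hχ
  have hχd : Differentiable ℝ χ := hGd.sub (by fun_prop)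
  have hχder : ∀ t, deriv χ t = deriv G t - deriv G (v x) := by
    intro t
    rw [hχ]
    rw [deriv_fun_sub (hGd t) (by fun_prop)]
    have : deriv (fun t : ℝ => deriv G (v x) * t) t = deriv G (v x) := by
      rw [deriv_const_mul _ differentiableAt_fun_id, deriv_id'', mul_one]
    rw [show (HMul.hMul (deriv G (v x))) = (fun t : ℝ => deriv G (v x) * t) from rfl, this]
  have hm := myMVT hχd (v x) (u x) (K0 * |u x - v x|)
    (fun t ht => by rw [hχder]; exact hstep2 t ht)
  have hχeq : χ (u x) - χ (v x) = G (u x) - G (v x) - deriv G (v x) * (u x - v x) := by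
    rw [hχ]; ring
  rw [hχeq] at hm
  calc |G (u x) - G (v x) - deriv G (v x) * (u x - v x)|
      ≤ K0 * |u x - v x| * |u x - v x| := hm
    _ ≤ C1 * (C4 * |x|) ^ p * (C3 * |x| ^ q) * (C3 * |x| ^ q) := by
        rw [hK0]; gcongr
    _ = C1 * C4 ^ p * C3 * C3 * |x| ^ (p + 2*q) := by
        rw [mul_pow, pow_add, two_mul, pow_add]; ring

lemma iter_sub {f g : ℝ → ℝ} (hf : ContDiff ℝ (⊤:ℕ∞) f) (hg : ContDiff ℝ (⊤:ℕ∞) g)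
    (n : ℕ) (x : ℝ) :
    iteratedDeriv n (fun y => f y - g y) x = iteratedDeriv n f x - iteratedDeriv n g x := by
  have : (fun y => f y - g y) = f - g := rfl
  rw [this]
  simp only [← iteratedDerivWithin_univ]
  exact iteratedDerivWithin_sub (Set.mem_univ x) uniqueDiffOn_univ
    (hf.contDiffWithinAt.of_le (by exact_mod_cast (le_top : (n:ℕ∞) ≤ ⊤))) (hg.contDiffWithinAt.of_le (by exact_mod_cast (le_top : (n:ℕ∞) ≤ ⊤)))

lemma iter_zero_fun (n : ℕ) (x : ℝ) : iteratedDeriv n (fun _ : ℝ => (0:ℝ)) x = 0 := by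
  induction n generalizing x with
  | zero => simp
  | succ k ih =>
      rw [iteratedDeriv_succ']
      have : deriv (fun _ : ℝ => (0:ℝ)) = fun _ : ℝ => (0:ℝ) := by funext t; simp
      rw [this, ih]

lemma iter_const (c : ℝ) (n : ℕ) (hn : 1 ≤ n) (x : ℝ) :
    iteratedDeriv n (fun _ : ℝ => c) x = 0 := by
  obtain ⟨m, rfl⟩ : ∃ m, n = m + 1 := ⟨n - 1, by omega⟩
  rw [iteratedDeriv_succ']
  have : deriv (fun _ : ℝ => c) = fun _ : ℝ => (0:ℝ) := by funext t; simp
  rw [this, iter_zero_fun]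

lemma iter_id (n : ℕ) (hn : 2 ≤ n) : iteratedDeriv n (id : ℝ → ℝ) 0 = 0 := by
  obtain ⟨m, rfl⟩ : ∃ m, n = m + 2 := ⟨n - 2, by omega⟩
  rw [show m + 2 = (m + 1) + 1 from rfl, iteratedDeriv_succ']
  have : deriv (id : ℝ → ℝ) = fun _ : ℝ => (1:ℝ) := by funext t; simp
  rw [this, iter_const _ _ (by omega)]

lemma pow_littleO {p q : ℕ} (h : q < p) :
    (fun x : ℝ => x ^ p) =o[𝓝 0] (fun x : ℝ => x ^ q) := by
  have h1 : (fun x : ℝ => x ^ p) = fun x : ℝ => x ^ q * x ^ (p - q) := by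
    funext x; rw [← pow_add]; congr 1; omega
  rw [h1]
  have h2 : (fun x : ℝ => x ^ (p - q)) =o[𝓝 0] (fun _ : ℝ => (1:ℝ)) := by
    rw [isLittleO_one_iff]
    have : Tendsto (fun x : ℝ => x ^ (p - q)) (𝓝 0) (𝓝 (0 ^ (p - q))) :=
      (continuous_pow (p - q)).tendsto 0
    simpa [zero_pow (by omega : p - q ≠ 0)] using this
  simpa using (isBigO_refl (fun x : ℝ => x ^ q) (𝓝 0)).mul_isLittleO h2

lemma lead_mul {h₁ h₂ : ℝ → ℝ} {c₁ c₂ : ℝ} {p q : ℕ}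
    (H1 : (fun x => h₁ x - c₁ * x ^ p) =o[𝓝 0] fun x : ℝ => x ^ p)
    (H2 : (fun x => h₂ x - c₂ * x ^ q) =o[𝓝 0] fun x : ℝ => x ^ q) :
    (fun x => h₁ x * h₂ x - c₁ * c₂ * x ^ (p + q)) =o[𝓝 0] fun x : ℝ => x ^ (p + q) := by
  have hO1 : h₁ =O[𝓝 0] fun x : ℝ => x ^ p := by
    have := H1.isBigO.add (((isBigO_refl (fun x : ℝ => x ^ p) (𝓝 0)).const_mul_left c₁))
    simpa using this
  have t1 : (fun x => h₁ x * (h₂ x - c₂ * x ^ q)) =o[𝓝 0] fun x : ℝ => x ^ (p + q) := by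
    have := hO1.mul_isLittleO H2
    simpa [pow_add] using this
  have t2 : (fun x => c₂ * x ^ q * (h₁ x - c₁ * x ^ p)) =o[𝓝 0] fun x : ℝ => x ^ (p + q) := by
    have := ((isBigO_refl (fun x : ℝ => x ^ q) (𝓝 0)).const_mul_left c₂).mul_isLittleO H1
    have h2 : (fun x : ℝ => x ^ q * x ^ p) = fun x : ℝ => x ^ (p + q) := by
      funext x; rw [← pow_add]; ring_nf
    simpa [h2] using this
  have := t1.add t2
  have heq : (fun x => h₁ x * (h₂ x - c₂ * x ^ q) + c₂ * x ^ q * (h₁ x - c₁ * x ^ p))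
      = fun x => h₁ x * h₂ x - c₁ * c₂ * x ^ (p + q) := by
    funext x; rw [pow_add]; ring
  rwa [heq] at this

lemma lead_comp {ψ u : ℝ → ℝ} {c : ℝ} {N : ℕ}
    (H : (fun y => ψ y - c * y ^ N) =o[𝓝 0] fun y : ℝ => y ^ N)
    (hu0 : Tendsto u (𝓝 0) (𝓝 0)) (huO : u =O[𝓝 0] fun x : ℝ => x) :
    (fun x => ψ (u x) - c * (u x) ^ N) =o[𝓝 0] fun x : ℝ => x ^ N := by
  have h1 := H.comp_tendsto hu0
  have h2 : (fun x => (u x) ^ N) =O[𝓝 0] fun x : ℝ => x ^ N := by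
    simpa using huO.pow N
  exact h1.trans_isBigO h2

lemma lead_pow {u : ℝ → ℝ} {b : ℝ} (N : ℕ)
    (H : (fun x => u x - b * x) =o[𝓝 0] fun x : ℝ => x) :
    (fun x => (u x) ^ N - b ^ N * x ^ N) =o[𝓝 0] fun x : ℝ => x ^ N := by
  have hO : u =O[𝓝 0] fun x : ℝ => x := by
    have := H.isBigO.add ((isBigO_refl (fun x : ℝ => x) (𝓝 0)).const_mul_left b)
    simpa using this
  induction N with
  | zero => simpa using isLittleO_refl_left (fun _ : ℝ => (0:ℝ)) (𝓝 0)
  | succ n ih =>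
    have t1 : (fun x => u x * ((u x) ^ n - b ^ n * x ^ n)) =o[𝓝 0]
        fun x : ℝ => x ^ (n + 1) := by
      have := hO.mul_isLittleO ih
      simpa [pow_succ, mul_comm] using this
    have t2 : (fun x => b ^ n * x ^ n * (u x - b * x)) =o[𝓝 0] fun x : ℝ => x ^ (n + 1) := by
      have := ((isBigO_refl (fun x : ℝ => x ^ n) (𝓝 0)).const_mul_left (b ^ n)).mul_isLittleO H
      have h2 : (fun x : ℝ => x ^ n * x) = fun x : ℝ => x ^ (n + 1) := by
        funext x; rw [pow_succ]
      simpa [h2] using this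
    have := t1.add t2
    have heq : (fun x => u x * ((u x) ^ n - b ^ n * x ^ n) + b ^ n * x ^ n * (u x - b * x))
        = fun x => (u x) ^ (n+1) - b ^ (n+1) * x ^ (n+1) := by
      funext x; rw [pow_succ, pow_succ, pow_succ]; ring
    rwa [heq] at this

lemma leadO {h : ℝ → ℝ} {c : ℝ} {n : ℕ}
    (H : (fun x => h x - c * x ^ n) =o[𝓝 0] fun x : ℝ => x ^ n) :
    h =O[𝓝 0] fun x : ℝ => x ^ n := by
  have := H.isBigO.add ((isBigO_refl (fun x : ℝ => x ^ n) (𝓝 0)).const_mul_left c)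
  simpa using this

lemma anti_deriv_nonpos {g : ℝ → ℝ} (hd : DifferentiableAt ℝ g 0) (ha : StrictAnti g) :
    deriv g 0 ≤ 0 := by
  have h1 : Tendsto (slope g 0) (𝓝[≠] 0) (𝓝 (deriv g 0)) :=
    hasDerivAt_iff_tendsto_slope.mp hd.hasDerivAt
  have h2 : Tendsto (slope g 0) (𝓝[>] 0) (𝓝 (deriv g 0)) :=
    h1.mono_left (nhdsWithin_mono 0 (fun x hx => ne_of_gt hx))
  refine le_of_tendsto h2 ?_
  filter_upwards [self_mem_nhdsWithin] with x hx
  have hx0 : (0:ℝ) < x := hx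
  have : g x < g 0 := ha hx0
  rw [slope_def_field]
  have : (g x - g 0) / (x - 0) ≤ 0 :=
    div_nonpos_of_nonpos_of_nonneg (by linarith) (by linarith)
  simpa [div_eq_inv_mul] using this

theorem taylor_series_agree_of_square_not_infinitesimally_involutive
    (f g : ℝ → ℝ) (hf : IsDiffeo f) (hg : IsDiffeo g)
    (hfa : StrictAnti f) (hga : StrictAnti g)
    (hf0 : f 0 = 0) (hg0 : g 0 = 0)
    (hsq : f ∘ f = g ∘ g)
    (hni : ∃ n : ℕ, 1 ≤ n ∧ iteratedDeriv n (f ∘ f) 0 ≠ iteratedDeriv n (id : ℝ → ℝ) 0) :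
    ∀ n : ℕ, 1 ≤ n → iteratedDeriv n f 0 = iteratedDeriv n g 0 := by
  classical
  by_contra hcon
  push_neg at hcon
  have hfs : ContDiff ℝ (⊤:ℕ∞) f := hf.2.1
  have hgs : ContDiff ℝ (⊤:ℕ∞) g := hg.2.1
  have hfd : Differentiable ℝ f := hfs.differentiable (by norm_num)
  have hgd : Differentiable ℝ g := hgs.differentiable (by norm_num)
  have hsqx : ∀ x, f (f x) = g (g x) := fun x => congrFun hsq x
  have hft : Tendsto f (𝓝 0) (𝓝 0) := by
    have := hfs.continuous.tendsto 0; rwa [hf0] at this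
  have hgt : Tendsto g (𝓝 0) (𝓝 0) := by
    have := hgs.continuous.tendsto 0; rwa [hg0] at this
  set b : ℝ := deriv f 0 with hbdef
  set b' : ℝ := deriv g 0 with hb'def
  -- b ≠ 0
  have hbne : b ≠ 0 := by
    intro hb0
    have hfinv : Function.LeftInverse (Function.invFun f) f :=
      Function.leftInverse_invFun hf.1.1
    have hcompid : Function.invFun f ∘ f = id := funext hfinv
    have hderiv1 : deriv (Function.invFun f ∘ f) 0
        = deriv (Function.invFun f) (f 0) * deriv f 0 :=
      deriv_comp (x := 0) ((hf.2.2.differentiable (by norm_num)) (f 0)) (hfd 0)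
    rw [hcompid, ← hbdef, hb0, mul_zero] at hderiv1
    simp at hderiv1
  have hb'ne : b' ≠ 0 := by
    intro hb0
    have hginv : Function.LeftInverse (Function.invFun g) g :=
      Function.leftInverse_invFun hg.1.1
    have hcompid : Function.invFun g ∘ g = id := funext hginv
    have hderiv1 : deriv (Function.invFun g ∘ g) 0
        = deriv (Function.invFun g) (g 0) * deriv g 0 :=
      deriv_comp (x := 0) ((hg.2.2.differentiable (by norm_num)) (g 0)) (hgd 0)
    rw [hcompid, ← hb'def, hb0, mul_zero] at hderiv1
    simp at hderiv1
  have hblt : b < 0 := lt_of_le_of_ne (anti_deriv_nonpos (hfd 0) hfa) hbne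
  have hb'lt : b' < 0 := lt_of_le_of_ne (anti_deriv_nonpos (hgd 0) hga) hb'ne
  -- first order expansions
  have Hf1 : (fun x => f x - b * x) =o[𝓝 0] fun x : ℝ => x := by
    have h0 : ∀ k < 1, iteratedDeriv k f 0 = 0 := by
      intro k hk
      interval_cases k
      simpa [iteratedDeriv_zero] using hf0
    have := peano hfs 1 h0
    simpa [iteratedDeriv_one] using this
  have Hg1 : (fun x => g x - b' * x) =o[𝓝 0] fun x : ℝ => x := by
    have h0 : ∀ k < 1, iteratedDeriv k g 0 = 0 := by
      intro k hk
      interval_cases k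
      simpa [iteratedDeriv_zero] using hg0
    have := peano hgs 1 h0
    simpa [iteratedDeriv_one] using this
  have hfO : f =O[𝓝 0] fun x : ℝ => x := by
    have := Hf1.isBigO.add ((isBigO_refl (fun x : ℝ => x) (𝓝 0)).const_mul_left b)
    simpa using this
  have hgO : g =O[𝓝 0] fun x : ℝ => x := by
    have := Hg1.isBigO.add ((isBigO_refl (fun x : ℝ => x) (𝓝 0)).const_mul_left b')
    simpa using this
  -- minimal N with differing derivatives
  have hex : ∃ n, 1 ≤ n ∧ iteratedDeriv n f 0 ≠ iteratedDeriv n g 0 := hcon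
  set N := Nat.find hex with hNdef
  obtain ⟨hN1, hNne⟩ := Nat.find_spec hex
  have hNmin : ∀ k, 1 ≤ k → k < N → iteratedDeriv k f 0 = iteratedDeriv k g 0 := by
    intro k hk1 hk2
    by_contra hne
    exact (Nat.find_min hex hk2) ⟨hk1, hne⟩
  set ψ : ℝ → ℝ := fun x => f x - g x with hψdef
  have hψs : ContDiff ℝ (⊤:ℕ∞) ψ := hfs.sub hgs
  have hψv : ∀ k < N, iteratedDeriv k ψ 0 = 0 := by
    intro k hk
    rcases Nat.eq_zero_or_pos k with h0 | h1
    · subst h0; rw [iteratedDeriv_zero]; simp [hψdef, hf0, hg0]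
    · rw [iter_sub hfs hgs k 0, hNmin k h1 hk, sub_self]
  set e' : ℝ := iteratedDeriv N ψ 0 / N.factorial with he'def
  have he'ne : e' ≠ 0 := by
    apply div_ne_zero
    · rw [iter_sub hfs hgs N 0]
      exact sub_ne_zero.mpr hNne
    · exact_mod_cast Nat.factorial_ne_zero N
  have Hψ : (fun x => ψ x - e' * x ^ N) =o[𝓝 0] fun x : ℝ => x ^ N := peano hψs N hψv
  have HψO : ψ =O[𝓝 0] fun x : ℝ => x ^ N := leadO Hψ
  -- L1
  have T1 : (fun x => ψ (f x) - e' * (f x) ^ N) =o[𝓝 0] (fun x : ℝ => x ^ N) :=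
    lead_comp Hψ hft hfO
  have T1b : (fun x => (f x) ^ N - b ^ N * x ^ N) =o[𝓝 0] (fun x : ℝ => x ^ N) :=
    lead_pow N Hf1
  have T1c : (fun x => ψ (f x) - e' * b ^ N * x ^ N) =o[𝓝 0] (fun x : ℝ => x ^ N) := by
    have h := T1.add (T1b.const_mul_left e')
    have heq : (fun x => (ψ (f x) - e' * (f x) ^ N) + e' * ((f x) ^ N - b ^ N * x ^ N))
        = fun x => ψ (f x) - e' * b ^ N * x ^ N := by funext x; ring
    rwa [heq] at h
  have T2 : (fun x => (g (f x) - g (g x)) - b' * ψ x) =o[𝓝 0] (fun x : ℝ => x ^ N) := by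
    have hφs : ContDiff ℝ (⊤:ℕ∞) (fun y => g y - b' * y) := hgs.sub (by fun_prop)
    have hφ0 : deriv (fun y => g y - b' * y) 0 = 0 := by
      rw [deriv_fun_sub (hgd 0) (by fun_prop), deriv_const_mul _ differentiableAt_fun_id,
        deriv_id'', mul_one, ← hb'def, sub_self]
    have h := squeeze1 hφs hφ0 hft hgt HψO
    have heq : (fun x => (g (f x) - b' * f x) - (g (g x) - b' * g x))
        = fun x => (g (f x) - g (g x)) - b' * ψ x := by
      funext x; simp only [hψdef]; ring
    rwa [heq] at h
  have hkey1 : e' * (b ^ N + b') = 0 := by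
    have hsum := (T1c.add T2).add (Hψ.const_mul_left b')
    have heq : (fun x => ((ψ (f x) - e' * b ^ N * x ^ N) + ((g (f x) - g (g x)) - b' * ψ x))
          + b' * (ψ x - e' * x ^ N))
        = fun x => (-(e' * b ^ N + b' * e')) * x ^ N := by
      funext x
      simp only [hψdef]
      rw [hsqx x]
      ring
    rw [heq] at hsum
    have := coeff_zero hsum
    linarith [this]
  have hkey1' : b ^ N + b' = 0 := by
    rcases mul_eq_zero.mp hkey1 with h | h
    · exact absurd h he'ne
    · exact h
  -- N ≥ 2
  have hN2 : 2 ≤ N := by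
    rcases Nat.lt_or_ge N 2 with h | h
    · exfalso
      have hN1' : N = 1 := by omega
      rw [hN1', pow_one] at hkey1'
      linarith
    · exact h
  have hbb' : b' = b := by
    have h1 := hNmin 1 (le_refl 1) (by omega)
    rw [iteratedDeriv_one, iteratedDeriv_one] at h1
    rw [hb'def, hbdef, h1]
  have hbN : b ^ N = -b := by rw [hbb'] at hkey1'; linarith
  have hNeven : Even N := by
    by_contra hodd
    have hoddN : Odd N := Nat.not_even_iff_odd.mp hodd
    have : b ^ N < 0 := Odd.pow_neg hoddN hblt
    linarith
  have hb1 : b = -1 := by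
    have htpos : (0:ℝ) < -b := by linarith
    have htN : (-b) ^ N = -b := by rw [Even.neg_pow hNeven, hbN]
    rcases lt_trichotomy (-b) 1 with h | h | h
    · have h2 : (-b) ^ N ≤ (-b) ^ 2 := pow_le_pow_of_le_one htpos.le h.le hN2
      nlinarith
    · linarith
    · have h2 : (-b) ^ 2 ≤ (-b) ^ N := pow_le_pow_right₀ h.le hN2
      nlinarith
  -- minimal M with F differing from id
  set M := Nat.find hni with hMdef
  obtain ⟨hM1, hMne⟩ := Nat.find_spec hni
  have hMne' : iteratedDeriv M (f ∘ f) 0 ≠ iteratedDeriv M (id : ℝ → ℝ) 0 := hMne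
  have hMmin : ∀ k, 1 ≤ k → k < M →
      iteratedDeriv k (f ∘ f) 0 = iteratedDeriv k (id : ℝ → ℝ) 0 := by
    intro k hk1 hk2
    by_contra hne
    exact (Nat.find_min hni hk2) ⟨hk1, hne⟩
  have hFs : ContDiff ℝ (⊤:ℕ∞) (f ∘ f) := hfs.comp hfs
  have hM2 : 2 ≤ M := by
    rcases Nat.lt_or_ge M 2 with h | h
    · exfalso
      have hM1' : M = 1 := by omega
      apply hMne'
      rw [hM1', iteratedDeriv_one, iteratedDeriv_one]
      have hc : deriv (f ∘ f) 0 = b * b := by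
        rw [deriv_comp (x := 0) (hfd (f 0)) (hfd 0), hf0, ← hbdef]
      rw [hc, hb1]
      simp
    · exact h
  set G : ℝ → ℝ := fun x => f (f x) - x with hGdef
  have hGseq : G = fun x => (f ∘ f) x - id x := rfl
  have hGs : ContDiff ℝ (⊤:ℕ∞) G := hFs.sub contDiff_id
  have hGv : ∀ k < M, iteratedDeriv k G 0 = 0 := by
    intro k hk
    have hh := iter_sub hFs contDiff_id k 0
    rcases Nat.eq_zero_or_pos k with h0 | h1
    · subst h0; rw [iteratedDeriv_zero]; simp [hGdef, hf0]
    · rw [hGseq]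
      simp only [Function.comp_apply, id_eq] at hh ⊢
      rw [hh, hMmin k h1 hk, sub_self]
  set c' : ℝ := iteratedDeriv M G 0 / M.factorial with hc'def
  have hc'ne : c' ≠ 0 := by
    apply div_ne_zero
    · rw [hGseq]
      have hh := iter_sub hFs contDiff_id M 0
      simp only [Function.comp_apply, id_eq] at hh ⊢
      rw [hh]
      exact sub_ne_zero.mpr hMne'
    · exact_mod_cast Nat.factorial_ne_zero M
  have HG : (fun x => G x - c' * x ^ M) =o[𝓝 0] fun x : ℝ => x ^ M := peano hGs M hGv
  have HGO : G =O[𝓝 0] fun x : ℝ => x ^ M := leadO HG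
  -- big-O facts
  have hGO1 : G =O[𝓝 0] fun x : ℝ => x := by
    have h1 : (fun x : ℝ => x ^ M) =o[𝓝 0] fun x : ℝ => x := by
      have := pow_littleO (p := M) (q := 1) (by omega)
      simpa [pow_one] using this
    exact HGO.trans h1.isBigO
  have hFO : (fun x => f (f x)) =O[𝓝 0] fun x : ℝ => x := by
    have h := hGO1.add (isBigO_refl (fun x : ℝ => x) (𝓝 0))
    have heq : (fun x => G x + x) = fun x => f (f x) := by
      funext x; simp [hGdef]
    rwa [heq] at h
  have hFt : Tendsto (fun x => f (f x)) (𝓝 0) (𝓝 0) := hft.comp hft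
  -- derivative expansions
  have hψ's : ContDiff ℝ (⊤:ℕ∞) (deriv ψ) := (contDiff_infty_iff_deriv.mp hψs).2
  have hψ'v : ∀ k < N - 1, iteratedDeriv k (deriv ψ) 0 = 0 := by
    intro k hk
    rw [← iteratedDeriv_succ']
    exact hψv (k + 1) (by omega)
  have Hψ' : (fun x => deriv ψ x - (N * e') * x ^ (N - 1)) =o[𝓝 0]
      fun x : ℝ => x ^ (N - 1) := by
    have h := peano hψ's (N - 1) hψ'v
    have hco : iteratedDeriv (N - 1) (deriv ψ) 0 / (N - 1).factorial = N * e' := by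
      have hsucc : iteratedDeriv (N - 1) (deriv ψ) 0 = iteratedDeriv N ψ 0 := by
        rw [← iteratedDeriv_succ']
        congr 1
        omega
      rw [hsucc, he'def]
      have h3 : N - 1 + 1 = N := by omega
      have hfac : (N.factorial : ℝ) = N * (N - 1).factorial := by
        calc (N.factorial : ℝ) = (((N - 1) + 1).factorial : ℝ) := by rw [h3]
          _ = (((N - 1) + 1 : ℕ) : ℝ) * ((N - 1).factorial : ℝ) := by
              rw [Nat.factorial_succ]; push_cast; ring
          _ = N * ((N - 1).factorial : ℝ) := by rw [h3]
      rw [hfac]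
      have hN0 : (N : ℝ) ≠ 0 := by positivity
      have hf0' : ((N - 1).factorial : ℝ) ≠ 0 := by exact_mod_cast Nat.factorial_ne_zero _
      field_simp
    rwa [hco] at h
  have hG's : ContDiff ℝ (⊤:ℕ∞) (deriv G) := (contDiff_infty_iff_deriv.mp hGs).2
  have hG'v : ∀ k < M - 1, iteratedDeriv k (deriv G) 0 = 0 := by
    intro k hk
    rw [← iteratedDeriv_succ']
    exact hGv (k + 1) (by omega)
  have HG' : (fun x => deriv G x - (M * c') * x ^ (M - 1)) =o[𝓝 0]
      fun x : ℝ => x ^ (M - 1) := by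
    have h := peano hG's (M - 1) hG'v
    have hco : iteratedDeriv (M - 1) (deriv G) 0 / (M - 1).factorial = M * c' := by
      have hsucc : iteratedDeriv (M - 1) (deriv G) 0 = iteratedDeriv M G 0 := by
        rw [← iteratedDeriv_succ']
        congr 1
        omega
      rw [hsucc, hc'def]
      have h3 : M - 1 + 1 = M := by omega
      have hfac : (M.factorial : ℝ) = M * (M - 1).factorial := by
        calc (M.factorial : ℝ) = (((M - 1) + 1).factorial : ℝ) := by rw [h3]
          _ = (((M - 1) + 1 : ℕ) : ℝ) * ((M - 1).factorial : ℝ) := by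
              rw [Nat.factorial_succ]; push_cast; ring
          _ = M * ((M - 1).factorial : ℝ) := by rw [h3]
      rw [hfac]
      have hM0 : (M : ℝ) ≠ 0 := by positivity
      have hf0' : ((M - 1).factorial : ℝ) ≠ 0 := by exact_mod_cast Nat.factorial_ne_zero _
      field_simp
    rwa [hco] at h
  -- second derivative big-O
  have hψ''O : (deriv (deriv ψ)) =O[𝓝 0] fun x : ℝ => x ^ (N - 2) := by
    have hs2 : ContDiff ℝ (⊤:ℕ∞) (deriv (deriv ψ)) := (contDiff_infty_iff_deriv.mp hψ's).2
    have hv2 : ∀ k < N - 2, iteratedDeriv k (deriv (deriv ψ)) 0 = 0 := by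
      intro k hk
      rw [← iteratedDeriv_succ', ← iteratedDeriv_succ']
      exact hψv (k + 1 + 1) (by omega)
    exact leadO (peano hs2 (N - 2) hv2)
  have hG''O : (deriv (deriv G)) =O[𝓝 0] fun x : ℝ => x ^ (M - 2) := by
    have hs2 : ContDiff ℝ (⊤:ℕ∞) (deriv (deriv G)) := (contDiff_infty_iff_deriv.mp hG's).2
    have hv2 : ∀ k < M - 2, iteratedDeriv k (deriv (deriv G)) 0 = 0 := by
      intro k hk
      rw [← iteratedDeriv_succ', ← iteratedDeriv_succ']
      exact hGv (k + 1 + 1) (by omega)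
    exact leadO (peano hs2 (M - 2) hv2)
  -- centralizer computation
  set K := N + M - 1 with hKdef
  have R1 : (fun x => ψ (f (f x)) - ψ x - deriv ψ x * (f (f x) - x)) =o[𝓝 0]
      fun x : ℝ => x ^ K := by
    have h := squeeze2 (u := fun x => f (f x)) (v := fun x : ℝ => x)
      hψs hψ''O hFO (isBigO_refl _ _) HGO
    exact h.trans_isLittleO (pow_littleO (by omega))
  have R2 : (fun x => G (f x) - G (g x) - deriv G (g x) * (f x - g x)) =o[𝓝 0]
      fun x : ℝ => x ^ K := by
    have h := squeeze2 (u := f) (v := g) hGs hG''O hfO hgO HψO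
    exact h.trans_isLittleO (pow_littleO (by omega))
  have P1 : (fun x => deriv ψ x * G x - (N * e') * c' * x ^ K) =o[𝓝 0]
      fun x : ℝ => x ^ K := by
    have h := lead_mul Hψ' HG
    have hexp : N - 1 + M = K := by omega
    rwa [hexp] at h
  have Q1 : (fun x => deriv G (g x) - (M * c') * b ^ (M - 1) * x ^ (M - 1)) =o[𝓝 0]
      fun x : ℝ => x ^ (M - 1) := by
    have h1 := lead_comp HG' hgt hgO
    have h2 := lead_pow (M - 1) (by rwa [hbb'] at Hg1 : (fun x => g x - b * x) =o[𝓝 0] _)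
    have h := h1.add (h2.const_mul_left (M * c'))
    have heq : (fun x => (deriv G (g x) - (M * c') * (g x) ^ (M - 1))
          + (M * c') * ((g x) ^ (M - 1) - b ^ (M - 1) * x ^ (M - 1)))
        = fun x => deriv G (g x) - (M * c') * b ^ (M - 1) * x ^ (M - 1) := by
      funext x; ring
    rwa [heq] at h
  have P2 : (fun x => deriv G (g x) * ψ x - ((M * c') * b ^ (M - 1)) * e' * x ^ K) =o[𝓝 0]
      fun x : ℝ => x ^ K := by
    have h := lead_mul Q1 Hψ
    have hexp : M - 1 + N = K := by omega
    rwa [hexp] at h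
  have hfinal : (N : ℝ) * e' * c' = (M * c') * b ^ (M - 1) * e' := by
    have hsum := ((R1.add P1).sub R2).sub P2
    have heq : (fun x => (((ψ (f (f x)) - ψ x - deriv ψ x * (f (f x) - x))
          + (deriv ψ x * G x - (N * e') * c' * x ^ K))
          - (G (f x) - G (g x) - deriv G (g x) * (f x - g x)))
          - (deriv G (g x) * ψ x - ((M * c') * b ^ (M - 1)) * e' * x ^ K))
        = fun x => (-(N * e' * c' - (M * c') * b ^ (M - 1) * e')) * x ^ K := by
      funext x
      simp only [hψdef, hGdef]
      rw [hsqx x, hsqx (g x)]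
      ring
    rw [heq] at hsum
    have := coeff_zero hsum
    linarith
  -- conclude
  have hNMeq : (N : ℝ) = M * b ^ (M - 1) := by
    have h1 : e' * c' ≠ 0 := mul_ne_zero he'ne hc'ne
    have h2 : (N : ℝ) * (e' * c') = (M * b ^ (M - 1)) * (e' * c') := by ring_nf; ring_nf at hfinal; linarith
    exact mul_right_cancel₀ h1 h2
  rcases Nat.even_or_odd M with hMe | hMo
  · -- M even: M - 1 odd, b^(M-1) = -1, N = -M < 0 contradiction
    have hModd : Odd (M - 1) := by
      rcases hMe with ⟨m, hm⟩
      exact ⟨m - 1, by omega⟩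
    rw [hb1, Odd.neg_one_pow hModd] at hNMeq
    have hNpos : (0:ℝ) < N := by exact_mod_cast hN1
    have hMpos : (0:ℝ) < M := by positivity
    nlinarith
  · -- M odd: b^(M-1) = 1, N = M, but N even M odd
    have hMeven : Even (M - 1) := by
      rcases hMo with ⟨m, hm⟩
      exact ⟨m, by omega⟩
    rw [hb1, Even.neg_one_pow hMeven, mul_one] at hNMeq
    have : N = M := by exact_mod_cast hNMeq
    rw [this] at hNeven
    exact (Nat.not_odd_iff_even.mpr hNeven) hMo
end

section
/- Let S be a formal power series over ℝ with zero constant term and linear coefficient −1 (S = −X + higher order terms). Then the first nonzero term after X in the compositional square S∘S has odd index: that is, if m ≥ 2 is an index such that the coefficient of X^k in S∘S equals the coefficient of X^k in X for all k < m, and the coefficient of X^m in S∘S differs from that of X, then m is odd. -/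
/-- Formal composition `A ∘ B` of power series over ℝ (intended for `B` with zero
constant term, in which case `coeff n (B ^ k) = 0` for `k > n` and the defining
sum is the full substitution of `B` into `A`). -/
noncomputable def PSComp (A B : PowerSeries ℝ) : PowerSeries ℝ :=
  PowerSeries.mk fun n => ∑ k ∈ Finset.range (n + 1),
    PowerSeries.coeff k A * PowerSeries.coeff n (B ^ k)

open PowerSeries

private lemma psc_coeff (A B : PowerSeries ℝ) (n : ℕ) :
    coeff n (PSComp A B) =
      ∑ k ∈ Finset.range (n + 1), coeff k A * coeff n (B ^ k) := by
  simp [PSComp]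

private lemma coeff_pow_zero {B : PowerSeries ℝ} (hB : constantCoeff B = 0)
    {j k : ℕ} (h : j < k) : coeff j (B ^ k) = 0 := by
  have hX : (X : PowerSeries ℝ) ∣ B := X_dvd_iff.2 hB
  have hXk : (X : PowerSeries ℝ) ^ k ∣ B ^ k := pow_dvd_pow_of_dvd hX k
  exact X_pow_dvd_iff.1 hXk j h

private lemma coeff_mul_congr {f f' g g' : PowerSeries ℝ} {N : ℕ}
    (hf : ∀ j < N, coeff j f = coeff j f')
    (hg : ∀ j < N, coeff j g = coeff j g')
    {j : ℕ} (hj : j < N) : coeff j (f * g) = coeff j (f' * g') := by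
  rw [coeff_mul, coeff_mul]
  refine Finset.sum_congr rfl fun p hp => ?_
  rw [Finset.HasAntidiagonal.mem_antidiagonal] at hp
  rw [hf p.1 (by omega), hg p.2 (by omega)]

private lemma coeff_pow_congr {f f' : PowerSeries ℝ} {N : ℕ}
    (hf : ∀ j < N, coeff j f = coeff j f') (k : ℕ)
    {j : ℕ} (hj : j < N) : coeff j (f ^ k) = coeff j (f' ^ k) := by
  induction k generalizing j with
  | zero => simp
  | succ k ih =>
    rw [pow_succ, pow_succ]
    exact coeff_mul_congr (fun i hi => ih hi) hf hj

private lemma pi_eq_iff {n : ℕ} {f g : PowerSeries ℝ} :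
    Ideal.Quotient.mk (Ideal.span {(X : PowerSeries ℝ) ^ (n + 1)}) f =
      Ideal.Quotient.mk (Ideal.span {(X : PowerSeries ℝ) ^ (n + 1)}) g ↔
    ∀ j < n + 1, coeff j f = coeff j g := by
  rw [Ideal.Quotient.eq, Ideal.mem_span_singleton, X_pow_dvd_iff]
  constructor
  · intro h j hj
    have := h j hj
    rw [map_sub, sub_eq_zero] at this
    exact this
  · intro h j hj
    rw [map_sub, h j hj, sub_self]

private lemma aeval_congr_of_nilpotent {R : Type*} [CommRing R] [Algebra ℝ R]
    {c : R} {N : ℕ} (hc : c ^ N = 0) {P Q : Polynomial ℝ}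
    (h : ∀ j < N, P.coeff j = Q.coeff j) :
    Polynomial.aeval c P = Polynomial.aeval c Q := by
  have hdvd : Polynomial.X ^ N ∣ P - Q :=
    Polynomial.X_pow_dvd_iff.2 fun d hd => by
      rw [Polynomial.coeff_sub, h d hd, sub_self]
  obtain ⟨D, hD⟩ := hdvd
  have h0 : Polynomial.aeval c (P - Q) = 0 := by
    rw [hD, map_mul, map_pow, Polynomial.aeval_X, hc, zero_mul]
  rw [map_sub, sub_eq_zero] at h0
  exact h0

private lemma coeff_PSComp_eq_comp {n : ℕ} {A B : PowerSeries ℝ}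
    (hB : constantCoeff B = 0) {j : ℕ} (hj : j < n + 1) :
    coeff j (PSComp A B) =
      ((trunc (n + 1) A).comp (trunc (n + 1) B)).coeff j := by
  have hq : ∀ i < n + 1, coeff i ((trunc (n + 1) B : Polynomial ℝ) : PowerSeries ℝ)
      = coeff i B := fun i hi => coeff_coe_trunc_of_lt hi
  rw [Polynomial.comp_eq_sum_left,
    Polynomial.sum_over_range' _ (fun e => by simp) (n + 1) (natDegree_trunc_lt A n)]
  rw [Polynomial.finset_sum_coeff]
  have hterm : ∀ e ∈ Finset.range (n + 1),
      (Polynomial.C ((trunc (n + 1) A).coeff e) * (trunc (n + 1) B) ^ e).coeff j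
        = coeff e A * coeff j (B ^ e) := by
    intro e he
    rw [Finset.mem_range] at he
    rw [Polynomial.coeff_C_mul, coeff_trunc, if_pos he]
    congr 1
    have hcast : ((trunc (n + 1) B ^ e : Polynomial ℝ) : PowerSeries ℝ)
        = ((trunc (n + 1) B : Polynomial ℝ) : PowerSeries ℝ) ^ e :=
      Polynomial.coe_pow _
    rw [← Polynomial.coeff_coe, hcast]
    exact coeff_pow_congr hq e hj
  rw [Finset.sum_congr rfl hterm, psc_coeff]
  refine Finset.sum_subset (Finset.range_subset_range.2 (by omega)) ?_
  intro e he hne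
  rw [Finset.mem_range] at he
  rw [Finset.mem_range, not_lt] at hne
  rw [coeff_pow_zero hB (by omega), mul_zero]

private lemma pi_nilpotent {n : ℕ} {C : PowerSeries ℝ} (hC : constantCoeff C = 0) :
    (Ideal.Quotient.mk (Ideal.span {(X : PowerSeries ℝ) ^ (n + 1)}) C) ^ (n + 1) = 0 := by
  rw [← map_pow, Ideal.Quotient.eq_zero_iff_mem, Ideal.mem_span_singleton]
  exact pow_dvd_pow_of_dvd (X_dvd_iff.2 hC) _

private lemma pi_PSComp {n : ℕ} {A B : PowerSeries ℝ} (hB : constantCoeff B = 0) :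
    Ideal.Quotient.mk (Ideal.span {(X : PowerSeries ℝ) ^ (n + 1)}) (PSComp A B) =
      Polynomial.aeval
        (Ideal.Quotient.mk (Ideal.span {(X : PowerSeries ℝ) ^ (n + 1)}) B)
        (trunc (n + 1) A) := by
  have hhom : Polynomial.aeval
      (Ideal.Quotient.mkₐ ℝ (Ideal.span {(X : PowerSeries ℝ) ^ (n + 1)}) B)
      (trunc (n + 1) A)
      = Ideal.Quotient.mkₐ ℝ (Ideal.span {(X : PowerSeries ℝ) ^ (n + 1)})
        (Polynomial.aeval B (trunc (n + 1) A)) :=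
    Polynomial.aeval_algHom_apply _ _ _
  have hmka : ∀ f : PowerSeries ℝ,
      Ideal.Quotient.mkₐ ℝ (Ideal.span {(X : PowerSeries ℝ) ^ (n + 1)}) f
        = Ideal.Quotient.mk (Ideal.span {(X : PowerSeries ℝ) ^ (n + 1)}) f :=
    fun f => rfl
  rw [← hmka B, hhom, hmka]
  rw [pi_eq_iff]
  intro j hj
  rw [Polynomial.aeval_eq_sum_range' (natDegree_trunc_lt A n), map_sum]
  have hterm : ∀ e ∈ Finset.range (n + 1),
      coeff j ((trunc (n + 1) A).coeff e • B ^ e) = coeff e A * coeff j (B ^ e) := by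
    intro e he
    rw [Finset.mem_range] at he
    rw [map_smul, smul_eq_mul, coeff_trunc, if_pos he]
  rw [Finset.sum_congr rfl hterm, psc_coeff]
  refine Finset.sum_subset (Finset.range_subset_range.2 (by omega)) ?_
  intro e he hne
  rw [Finset.mem_range] at he
  rw [Finset.mem_range, not_lt] at hne
  rw [coeff_pow_zero hB (by omega), mul_zero]

private lemma constantCoeff_PSComp {B C : PowerSeries ℝ}
    (hB : constantCoeff B = 0) : constantCoeff (PSComp B C) = 0 := by
  rw [← coeff_zero_eq_constantCoeff, psc_coeff, Finset.sum_range_one, pow_zero,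
    coeff_zero_eq_constantCoeff, hB, zero_mul]

private lemma coeff_PSComp_assoc {n : ℕ} {A B C : PowerSeries ℝ}
    (hB : constantCoeff B = 0) (hC : constantCoeff C = 0)
    {j : ℕ} (hj : j < n + 1) :
    coeff j (PSComp (PSComp A B) C) = coeff j (PSComp A (PSComp B C)) := by
  have hBC : constantCoeff (PSComp B C) = 0 := constantCoeff_PSComp hB
  have step : Polynomial.aeval
      (Ideal.Quotient.mk (Ideal.span {(X : PowerSeries ℝ) ^ (n + 1)}) C)
      (trunc (n + 1) (PSComp A B))
      = Polynomial.aeval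
        (Polynomial.aeval
          (Ideal.Quotient.mk (Ideal.span {(X : PowerSeries ℝ) ^ (n + 1)}) C)
          (trunc (n + 1) B)) (trunc (n + 1) A) := by
    rw [← Polynomial.aeval_comp]
    refine aeval_congr_of_nilpotent (pi_nilpotent hC) ?_
    intro i hi
    rw [coeff_trunc, if_pos hi, coeff_PSComp_eq_comp hB hi]
  have key : Ideal.Quotient.mk (Ideal.span {(X : PowerSeries ℝ) ^ (n + 1)})
      (PSComp (PSComp A B) C) =
      Ideal.Quotient.mk (Ideal.span {(X : PowerSeries ℝ) ^ (n + 1)})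
      (PSComp A (PSComp B C)) := by
    rw [pi_PSComp (n := n) hC, pi_PSComp (n := n) hBC, step, pi_PSComp (n := n) hC]
  exact pi_eq_iff.1 key j hj

theorem first_nonidentity_term_of_square_has_odd_index
    (S : PowerSeries ℝ)
    (h0 : PowerSeries.constantCoeff S = 0)
    (h1 : PowerSeries.coeff 1 S = -1)
    (m : ℕ) (hm : 2 ≤ m)
    (hagree : ∀ k < m, PowerSeries.coeff k (PSComp S S) =
      PowerSeries.coeff k (PowerSeries.X : PowerSeries ℝ))
    (hne : PowerSeries.coeff m (PSComp S S) ≠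
      PowerSeries.coeff m (PowerSeries.X : PowerSeries ℝ)) :
    Odd m := by
  set P := PSComp S S with hPdef
  set c := coeff m P with hc
  have hcne : c ≠ 0 := by
    intro h
    apply hne
    rw [h, coeff_X, if_neg (by omega)]
  have hPX : ∀ k < m, coeff k P = coeff k (X : PowerSeries ℝ) := hagree
  have hP0 : constantCoeff P = 0 := constantCoeff_PSComp h0
  obtain ⟨Q, hQ⟩ : (X : PowerSeries ℝ) ^ m ∣ P - X := by
    refine X_pow_dvd_iff.2 fun d hd => ?_
    rw [map_sub, hPX d hd, sub_self]
  have hPeq : P = X + X ^ m * Q := by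
    rw [← hQ]; ring
  have hpowP : ∀ k, 2 ≤ k → coeff m (P ^ k) = if k = m then 1 else 0 := by
    intro k hk
    rw [hPeq, add_pow, map_sum]
    rw [Finset.sum_eq_single k]
    · rw [Nat.sub_self, pow_zero, mul_one, Nat.choose_self, Nat.cast_one, mul_one,
        coeff_X_pow]
      by_cases h : m = k
      · rw [if_pos h, if_pos h.symm]
      · rw [if_neg h, if_neg fun hh => h hh.symm]
    · intro i hi hik
      rw [Finset.mem_range] at hi
      have hik' : i < k := by omega
      have hbig : m < i + m * (k - i) := by
        have h1' : 1 ≤ k - i := by omega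
        rcases Nat.eq_zero_or_pos i with h | h
        · subst h
          have h2' : 2 ≤ k - 0 := by omega
          calc m < m * 2 := by omega
            _ ≤ m * (k - 0) := Nat.mul_le_mul_left m h2'
            _ = 0 + m * (k - 0) := by omega
        · calc m < i + m * 1 := by omega
            _ ≤ i + m * (k - i) := by
                have := Nat.mul_le_mul_left m h1'
                omega
      have hterm : (X : PowerSeries ℝ) ^ i * (X ^ m * Q) ^ (k - i)
            * (k.choose i : PowerSeries ℝ)
          = X ^ (i + m * (k - i)) * (Q ^ (k - i) * (k.choose i : PowerSeries ℝ)) := by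
        rw [mul_pow, ← pow_mul]
        ring
      rw [hterm, coeff_X_pow_mul', if_neg (by omega)]
    · intro h
      exact absurd (Finset.self_mem_range_succ k) h
  obtain ⟨U, hU⟩ : (X : PowerSeries ℝ) ∣ S := X_dvd_iff.2 h0
  have hU1 : constantCoeff U = -1 := by
    have h2 : coeff 1 S = coeff 0 U := by
      rw [hU, show (X : PowerSeries ℝ) * U = X ^ 1 * U by rw [pow_one],
        coeff_X_pow_mul' U 1 1, if_pos le_rfl]
    rw [← coeff_zero_eq_constantCoeff, ← h2, h1]
  have hSm : coeff m (S ^ m) = (-1) ^ m := by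
    rw [hU, mul_pow, coeff_X_pow_mul' (U ^ m) m m, if_pos le_rfl, Nat.sub_self,
      coeff_zero_eq_constantCoeff, map_pow, hU1]
  -- compute coeff m (PSComp S P)
  have hleft : coeff m (PSComp S P) = -c + coeff m S := by
    rw [psc_coeff]
    have hterm : ∀ k ∈ Finset.range (m + 1),
        coeff k S * coeff m (P ^ k)
          = (if k = 1 then -c else 0) + (if k = m then coeff m S else 0) := by
      intro k hk
      rw [Finset.mem_range] at hk
      rcases Nat.lt_or_ge k 2 with h2 | h2
      · interval_cases k
        · rw [pow_zero, coeff_one, if_neg (by omega), mul_zero,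
            if_neg (by omega), if_neg (by omega), add_zero]
        · rw [pow_one, ← hc, h1, if_pos rfl, if_neg (by omega), add_zero]
          ring
      · by_cases hkm : k = m
        · rw [hpowP k h2, if_pos hkm, mul_one, if_neg (show k ≠ 1 by omega),
            if_pos hkm, zero_add, hkm]
        · rw [hpowP k h2, if_neg hkm, mul_zero, if_neg (show k ≠ 1 by omega),
            if_neg hkm, zero_add]
    rw [Finset.sum_congr rfl hterm, Finset.sum_add_distrib,
      Finset.sum_ite_eq' (Finset.range (m + 1)) 1,
      Finset.sum_ite_eq' (Finset.range (m + 1)) m,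
      if_pos (Finset.mem_range.2 (by omega)), if_pos (Finset.mem_range.2 (by omega))]
  -- compute coeff m (PSComp P S)
  have hright : coeff m (PSComp P S) = coeff m S + c * (-1) ^ m := by
    rw [psc_coeff]
    have hterm : ∀ k ∈ Finset.range (m + 1),
        coeff k P * coeff m (S ^ k)
          = (if k = 1 then coeff m S else 0) + (if k = m then c * (-1) ^ m else 0) := by
      intro k hk
      rw [Finset.mem_range] at hk
      by_cases hkm : k = m
      · subst hkm
        rw [hSm, ← hc, if_neg (by omega), if_pos rfl, zero_add]
      · have hklt : k < m := by omega
        rw [hPX k hklt, coeff_X]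
        by_cases hk1 : k = 1
        · subst hk1
          rw [if_pos rfl, if_pos rfl, pow_one, one_mul, if_neg hkm, add_zero]
        · rw [if_neg hk1, if_neg hk1, zero_mul, if_neg hkm, add_zero]
    rw [Finset.sum_congr rfl hterm, Finset.sum_add_distrib,
      Finset.sum_ite_eq' (Finset.range (m + 1)) 1,
      Finset.sum_ite_eq' (Finset.range (m + 1)) m,
      if_pos (Finset.mem_range.2 (by omega)), if_pos (Finset.mem_range.2 (by omega))]
  have hassoc : coeff m (PSComp P S) = coeff m (PSComp S P) :=
    coeff_PSComp_assoc (n := m) h0 h0 (by omega)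
  rw [hleft, hright] at hassoc
  have hkey : c * (-1) ^ m = -c := by linarith
  rcases Nat.even_or_odd m with he | ho
  · exfalso
    rw [he.neg_one_pow, mul_one] at hkey
    apply hcne
    linarith
  · exact ho
end

section
/- Let S be a formal power series over ℝ with zero constant term and linear coefficient −1, and let m ≥ 1. If S∘S ≡ X modulo X^(2m) (the coefficients of S∘S and X agree in all degrees < 2m), then S∘S ≡ X modulo X^(2m+1). -/
open PowerSeries Finset

private lemma myXpowDvdPow {B : PowerSeries ℝ} (hB : PowerSeries.constantCoeff B = 0) (k : ℕ) :
    (PowerSeries.X : PowerSeries ℝ) ^ k ∣ B ^ k :=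
  pow_dvd_pow_of_dvd (PowerSeries.X_dvd_iff.mpr hB) k

private lemma myCoeffPowZero {B : PowerSeries ℝ} (hB : PowerSeries.constantCoeff B = 0)
    {j k : ℕ} (h : j < k) : PowerSeries.coeff j (B ^ k) = 0 :=
  (PowerSeries.X_pow_dvd_iff.mp (myXpowDvdPow hB k)) j h

private lemma myDvdPowSubPow {B B' : PowerSeries ℝ} (d k : ℕ)
    (hB : PowerSeries.constantCoeff B = 0) (hB' : PowerSeries.constantCoeff B' = 0)
    (h : (PowerSeries.X : PowerSeries ℝ) ^ d ∣ B - B') :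
    (PowerSeries.X : PowerSeries ℝ) ^ (d + k) ∣ B ^ (k + 1) - B' ^ (k + 1) := by
  rw [← geom_sum₂_mul B B' (k + 1), pow_add, mul_comm ((PowerSeries.X : PowerSeries ℝ) ^ d) _]
  apply mul_dvd_mul _ h
  apply Finset.dvd_sum
  intro i hi
  have hik : i ≤ k := by simpa using Nat.lt_succ_iff.mp (Finset.mem_range.mp hi)
  have : (PowerSeries.X : PowerSeries ℝ) ^ i * (PowerSeries.X : PowerSeries ℝ) ^ (k - i) ∣
      B ^ i * B' ^ (k + 1 - 1 - i) := by
    simpa using mul_dvd_mul (myXpowDvdPow hB i) (myXpowDvdPow hB' (k - i))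
  rwa [← pow_add, Nat.add_sub_cancel' hik] at this

/-- mod `X^(n+1)`, `PSComp A B` is the finite sum `∑_{k ≤ n} a_k B^k`. -/
private lemma myCompApprox (A B : PowerSeries ℝ) (n : ℕ)
    (hB : PowerSeries.constantCoeff B = 0) :
    (PowerSeries.X : PowerSeries ℝ) ^ (n + 1) ∣
      PSComp A B - ∑ k ∈ Finset.range (n + 1), PowerSeries.C (PowerSeries.coeff k A) * B ^ k := by
  rw [PowerSeries.X_pow_dvd_iff]
  intro j hj
  rw [map_sub, sub_eq_zero, PSComp, PowerSeries.coeff_mk, map_sum]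
  have : ∀ k ∈ Finset.range (n + 1),
      PowerSeries.coeff j (PowerSeries.C (PowerSeries.coeff k A) * B ^ k)
        = PowerSeries.coeff k A * PowerSeries.coeff j (B ^ k) := fun k _ => by
    rw [PowerSeries.coeff_C_mul]
  rw [Finset.sum_congr rfl this]
  apply Finset.sum_subset
  · exact Finset.range_subset_range.mpr (by omega)
  · intro k hk hk'
    have : j < k := by simp only [Finset.mem_range] at hk hk'; omega
    rw [myCoeffPowZero hB this, mul_zero]

/-- If `constantCoeff B = 0` then `coeff n (B^n) = (coeff 1 B)^n`. -/
private lemma myCoeffPowSelf {B : PowerSeries ℝ} (hB : PowerSeries.constantCoeff B = 0)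
    (n : ℕ) (hn : 1 ≤ n) :
    PowerSeries.coeff n (B ^ n) = (PowerSeries.coeff 1 B) ^ n := by
  set b := PowerSeries.coeff 1 B with hb
  have h2 : (PowerSeries.X : PowerSeries ℝ) ^ 2 ∣ B - PowerSeries.C b * PowerSeries.X := by
    rw [PowerSeries.X_pow_dvd_iff]
    intro j hj
    rw [map_sub, sub_eq_zero]
    interval_cases j
    · simp [PowerSeries.coeff_zero_eq_constantCoeff_apply, hB]
    · rw [PowerSeries.coeff_C_mul, PowerSeries.coeff_X, if_pos rfl, mul_one, hb]
  obtain ⟨k, rfl⟩ : ∃ k, n = k + 1 := ⟨n - 1, by omega⟩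
  have hd := myDvdPowSubPow 2 k hB (by simp) h2
  have hc := (PowerSeries.X_pow_dvd_iff.mp hd) (k + 1) (by omega)
  rw [map_sub, sub_eq_zero] at hc
  rw [hc, mul_pow, ← map_pow, PowerSeries.coeff_C_mul, PowerSeries.coeff_X_pow_self, mul_one]

theorem square_identity_mod_even_implies_mod_next_odd
    (S : PowerSeries ℝ)
    (h0 : PowerSeries.constantCoeff S = 0)
    (h1 : PowerSeries.coeff 1 S = -1)
    (m : ℕ) (hm : 1 ≤ m)
    (hagree : ∀ k < 2 * m, PowerSeries.coeff k (PSComp S S) =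
      PowerSeries.coeff k (PowerSeries.X : PowerSeries ℝ)) :
    ∀ k < 2 * m + 1, PowerSeries.coeff k (PSComp S S) =
      PowerSeries.coeff k (PowerSeries.X : PowerSeries ℝ) := by
  intro k hk
  rcases Nat.lt_or_ge k (2 * m) with hk2 | hk2
  · exact hagree k hk2
  have hkn : k = 2 * m := by omega
  subst hkn
  set n := 2 * m with hn
  have hn2 : 2 ≤ n := by omega
  set T := PSComp S S with hT
  rw [PowerSeries.coeff_X, if_neg (by omega)]
  set c := PowerSeries.coeff n T with hc
  show c = 0
  -- basic facts about T
  have hT0 : PowerSeries.constantCoeff T = 0 := by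
    have h00 := hagree 0 (by omega)
    rw [PowerSeries.coeff_X, if_neg (by omega)] at h00
    rw [← PowerSeries.coeff_zero_eq_constantCoeff_apply]; exact h00
  have hT1 : PowerSeries.coeff 1 T = 1 := by
    have h11 := hagree 1 (by omega)
    rwa [PowerSeries.coeff_X, if_pos rfl] at h11
  have hTX : (PowerSeries.X : PowerSeries ℝ) ^ n ∣ T - PowerSeries.X := by
    rw [PowerSeries.X_pow_dvd_iff]
    intro j hj
    rw [map_sub, sub_eq_zero]
    exact hagree j hj
  have hTk : ∀ k, 2 ≤ k → k < n → PowerSeries.coeff n (T ^ k) = 0 := by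
    intro k h2k hkn
    obtain ⟨k', rfl⟩ : ∃ k', k = k' + 1 := ⟨k - 1, by omega⟩
    have hd := myDvdPowSubPow n k' hT0 (by simp) hTX
    have hdd := PowerSeries.X_pow_dvd_iff.mp
      (dvd_trans (pow_dvd_pow _ (by omega : n + 1 ≤ n + k')) hd) n (by omega)
    rw [map_sub, sub_eq_zero] at hdd
    rw [hdd, PowerSeries.coeff_X_pow, if_neg (by omega)]
  have hEven : Even n := by rw [hn]; exact even_two_mul m
  have hsub : ({1, n} : Finset ℕ) ⊆ Finset.range (n + 1) := by
    intro x hx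
    simp only [Finset.mem_insert, Finset.mem_singleton] at hx
    rcases hx with rfl | rfl <;> simp only [Finset.mem_range] <;> omega
  have hne : (1 : ℕ) ≠ n := by omega
  -- coefficient n of  PSComp T S
  have hRn : PowerSeries.coeff n (PSComp T S) = PowerSeries.coeff n S + c := by
    rw [PSComp, PowerSeries.coeff_mk]
    have hzero : ∀ x ∈ Finset.range (n + 1), x ∉ ({1, n} : Finset ℕ) →
        PowerSeries.coeff x T * PowerSeries.coeff n (S ^ x) = 0 := by
      intro x hx hx'
      simp only [Finset.mem_range] at hx
      simp only [Finset.mem_insert, Finset.mem_singleton, not_or] at hx'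
      rcases Nat.eq_zero_or_pos x with rfl | hxpos
      · rw [pow_zero, PowerSeries.coeff_one, if_neg (by omega), mul_zero]
      · rw [hagree x (by omega), PowerSeries.coeff_X, if_neg (by omega), zero_mul]
    rw [← Finset.sum_subset hsub hzero, Finset.sum_pair hne]
    rw [pow_one, hT1, one_mul, ← hc, myCoeffPowSelf h0 n (by omega), h1,
      hEven.neg_one_pow, mul_one]
  -- coefficient n of  PSComp S T
  have hLn : PowerSeries.coeff n (PSComp S T) = PowerSeries.coeff n S - c := by
    rw [PSComp, PowerSeries.coeff_mk]
    have hzero : ∀ x ∈ Finset.range (n + 1), x ∉ ({1, n} : Finset ℕ) →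
        PowerSeries.coeff x S * PowerSeries.coeff n (T ^ x) = 0 := by
      intro x hx hx'
      simp only [Finset.mem_range] at hx
      simp only [Finset.mem_insert, Finset.mem_singleton, not_or] at hx'
      rcases Nat.eq_zero_or_pos x with rfl | hxpos
      · rw [PowerSeries.coeff_zero_eq_constantCoeff_apply, h0, zero_mul]
      · rw [hTk x (by omega) (by omega), mul_zero]
    rw [← Finset.sum_subset hsub hzero, Finset.sum_pair hne]
    rw [pow_one, h1, ← hc, myCoeffPowSelf hT0 n (by omega), hT1, one_pow, mul_one]
    ring
  -- associativity mod X^(n+1)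
  set P : Polynomial ℝ :=
    ∑ j ∈ Finset.range (n + 1), Polynomial.C (PowerSeries.coeff j S) * Polynomial.X ^ j with hP
  have hPc : ∀ i, Polynomial.coeff P i = if i ≤ n then PowerSeries.coeff i S else 0 := by
    intro i
    rw [hP, Polynomial.finset_sum_coeff]
    simp only [Polynomial.coeff_C_mul, Polynomial.coeff_X_pow, mul_ite, mul_one, mul_zero]
    rw [Finset.sum_ite_eq (Finset.range (n + 1)) i (fun j => PowerSeries.coeff j S)]
    simp [Nat.lt_succ_iff]
  have hSP : (PowerSeries.X : PowerSeries ℝ) ^ (n + 1) ∣ S - (P : PowerSeries ℝ) := by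
    rw [PowerSeries.X_pow_dvd_iff]
    intro j hj
    rw [map_sub, Polynomial.coeff_coe, hPc, if_pos (by omega), sub_self]
  set Q : Polynomial ℝ :=
    ∑ k ∈ Finset.range (n + 1), Polynomial.C (PowerSeries.coeff k S) * P ^ k with hQ
  have coe_sum : ∀ (s : Finset ℕ) (f : ℕ → Polynomial ℝ),
      ((∑ k ∈ s, f k : Polynomial ℝ) : PowerSeries ℝ) = ∑ k ∈ s, ((f k : Polynomial ℝ) : PowerSeries ℝ) :=
    fun s f => map_sum (Polynomial.coeToPowerSeries.ringHom (R := ℝ)) f s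
  have hQcoe : (Q : PowerSeries ℝ) = ∑ k ∈ Finset.range (n + 1),
      PowerSeries.C (PowerSeries.coeff k S) * (P : PowerSeries ℝ) ^ k := by
    rw [hQ, coe_sum]
    simp only [Polynomial.coe_mul, Polynomial.coe_pow, Polynomial.coe_C]
  have haevalP : Polynomial.aeval S P = ∑ j ∈ Finset.range (n + 1),
      PowerSeries.C (PowerSeries.coeff j S) * S ^ j := by
    rw [hP, map_sum]
    simp [Polynomial.aeval_C, PowerSeries.algebraMap_apply]
  have haevalQ : Polynomial.aeval S Q = ∑ k ∈ Finset.range (n + 1),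
      PowerSeries.C (PowerSeries.coeff k S) * (Polynomial.aeval S P) ^ k := by
    rw [hQ, map_sum]
    simp [Polynomial.aeval_C, PowerSeries.algebraMap_apply]
  have hsum_congr : ∀ U V : PowerSeries ℝ, (PowerSeries.X : PowerSeries ℝ) ^ (n + 1) ∣ U - V →
      (PowerSeries.X : PowerSeries ℝ) ^ (n + 1) ∣
        (∑ k ∈ Finset.range (n + 1), PowerSeries.C (PowerSeries.coeff k S) * U ^ k) -
        (∑ k ∈ Finset.range (n + 1), PowerSeries.C (PowerSeries.coeff k S) * V ^ k) := by
    intro U V h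
    rw [← Finset.sum_sub_distrib]
    apply Finset.dvd_sum
    intro k _
    rw [← mul_sub]
    exact Dvd.dvd.mul_left (dvd_trans h (sub_dvd_pow_sub_pow U V k)) _
  have hTP : (PowerSeries.X : PowerSeries ℝ) ^ (n + 1) ∣ T - Polynomial.aeval S P := by
    rw [haevalP, hT]
    exact myCompApprox S S n h0
  -- chain for L := PSComp S T
  have hA1 := myCompApprox S T n hT0
  have hA2 := hsum_congr T (Polynomial.aeval S P) hTP
  have d1 := dvd_add hA1 hA2
  rw [sub_add_sub_cancel, ← haevalQ] at d1
  -- aeval S Q ≈ its degree-≤-n truncation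
  have hA4 : (PowerSeries.X : PowerSeries ℝ) ^ (n + 1) ∣ Polynomial.aeval S Q -
      ∑ i ∈ Finset.range (n + 1), PowerSeries.C (Polynomial.coeff Q i) * S ^ i := by
    have hN : Q.natDegree < max (n + 1) (Q.natDegree + 1) :=
      lt_of_lt_of_le (Nat.lt_succ_self _) (le_max_right _ _)
    rw [Polynomial.aeval_eq_sum_range' hN S]
    have hssub : Finset.range (n + 1) ⊆ Finset.range (max (n + 1) (Q.natDegree + 1)) :=
      Finset.range_subset_range.mpr (le_max_left _ _)
    rw [← Finset.sum_sdiff hssub]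
    simp only [PowerSeries.smul_eq_C_mul]
    rw [add_sub_cancel_right]
    apply Finset.dvd_sum
    intro i hi
    have hi' : n + 1 ≤ i := by
      simp only [Finset.mem_sdiff, Finset.mem_range] at hi
      omega
    exact Dvd.dvd.mul_left (dvd_trans (pow_dvd_pow _ hi') (myXpowDvdPow h0 i)) _
  have d2 := dvd_add d1 hA4
  rw [sub_add_sub_cancel] at d2
  -- coeff i T = Q.coeff i for i ≤ n
  have hTQdvd : (PowerSeries.X : PowerSeries ℝ) ^ (n + 1) ∣ T - (Q : PowerSeries ℝ) := by
    have u1 : (PowerSeries.X : PowerSeries ℝ) ^ (n + 1) ∣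
        T - ∑ k ∈ Finset.range (n + 1), PowerSeries.C (PowerSeries.coeff k S) * S ^ k := by
      rw [hT]; exact myCompApprox S S n h0
    have u2 := hsum_congr S (P : PowerSeries ℝ) hSP
    rw [← hQcoe] at u2
    have := dvd_add u1 u2
    rwa [sub_add_sub_cancel] at this
  have htq : ∀ i ∈ Finset.range (n + 1),
      PowerSeries.C (Polynomial.coeff Q i) * S ^ i = PowerSeries.C (PowerSeries.coeff i T) * S ^ i := by
    intro i hi
    have h' := PowerSeries.X_pow_dvd_iff.mp hTQdvd i (Finset.mem_range.mp hi)
    rw [map_sub, sub_eq_zero] at h'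
    rw [h', Polynomial.coeff_coe]
  rw [Finset.sum_congr rfl htq] at d2
  have hA6 := myCompApprox T S n h0
  have d3 := dvd_sub d2 hA6
  rw [sub_sub_sub_cancel_right] at d3
  have hfin := PowerSeries.X_pow_dvd_iff.mp d3 n (by omega)
  rw [map_sub, sub_eq_zero, hLn, hRn] at hfin
  linarith
end

section
/- Let μ be a nonzero real number with μ ≠ 1 and μ ≠ −1, and let Q be a formal power series over ℝ with zero constant term such that Q commutes with μX under formal composition, i.e. Q(μX) = μ·Q(X). If the linear coefficient of Q is 1, then Q = X. -/
theorem commutes_with_dilation_implies_identity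
    (μ : ℝ) (hμ0 : μ ≠ 0) (hμ1 : μ ≠ 1) (hμn1 : μ ≠ -1)
    (Q : PowerSeries ℝ)
    (hQ0 : PowerSeries.constantCoeff Q = 0)
    (hcomm : PSComp Q (μ • (PowerSeries.X : PowerSeries ℝ)) = μ • Q)
    (hQ1 : PowerSeries.coeff 1 Q = 1) :
    Q = (PowerSeries.X : PowerSeries ℝ) := by
  have key : ∀ n, PowerSeries.coeff n Q * μ ^ n = μ * PowerSeries.coeff n Q := by
    intro n
    have h := congrArg (PowerSeries.coeff n) hcomm
    rw [PSComp, PowerSeries.coeff_mk, PowerSeries.coeff_smul] at h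
    have hsum : ∑ k ∈ Finset.range (n + 1),
        PowerSeries.coeff k Q * PowerSeries.coeff n ((μ • (PowerSeries.X : PowerSeries ℝ)) ^ k)
        = PowerSeries.coeff n Q * μ ^ n := by
      have : ∀ k ∈ Finset.range (n + 1),
          PowerSeries.coeff k Q * PowerSeries.coeff n ((μ • (PowerSeries.X : PowerSeries ℝ)) ^ k)
          = if k = n then PowerSeries.coeff n Q * μ ^ n else 0 := by
        intro k _
        rw [smul_pow, PowerSeries.coeff_smul, PowerSeries.coeff_X_pow]
        by_cases hk : k = n
        · subst hk; simp
        · simp [hk, Ne.symm hk]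
      rw [Finset.sum_congr rfl this, Finset.sum_ite_eq' (Finset.range (n + 1)) n]
      simp
    rw [hsum] at h
    exact h
  ext n
  rcases n with _ | _ | n
  · simpa using hQ0
  · simpa using hQ1
  · have h := key (n + 2)
    have hpow : μ ^ (n + 2) ≠ μ := by
      intro hp
      have h2 : μ ^ (n + 1) * μ = 1 * μ := by
        rw [← pow_succ, hp, one_mul]
      have h1 : μ ^ (n + 1) = 1 := mul_right_cancel₀ hμ0 h2
      rcases (pow_eq_one_iff_of_ne_zero (Nat.succ_ne_zero n)).mp h1 with h3 | ⟨h3, _⟩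
      · exact hμ1 h3
      · exact hμn1 h3
    have : PowerSeries.coeff (n + 2) Q = 0 := by
      have hz : PowerSeries.coeff (n + 2) Q * (μ ^ (n + 2) - μ) = 0 := by
        rw [mul_sub]; linarith [h]
      rcases mul_eq_zero.mp hz with hc | hc
      · exact hc
      · exact absurd (sub_eq_zero.mp hc) hpow
    rw [this, PowerSeries.coeff_X]
    simp
end

section
/- (Kopell) Let f and g be orientation-preserving C^∞ diffeomorphisms of ℝ, both fixing 0, which commute: f∘g = g∘f. Suppose T_0 f = X, i.e. f'(0) = 1 and all higher derivatives of f vanish at 0, and suppose 0 is not an interior point of fix(f). Then T_0 g = X as well: g'(0) = 1 and all higher derivatives of g vanish at 0. -/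
open Filter Topology Set Asymptotics Function

lemma taylor_o (k : ℕ) (h : ℝ → ℝ) (hC : ContDiff ℝ (⊤ : ℕ∞) h)
    (hz : ∀ i ≤ k, iteratedDeriv i h 0 = 0) :
    (fun x => h x) =o[𝓝 (0:ℝ)] fun x => x ^ k := by
  induction k generalizing h with
  | zero =>
    simp only [pow_zero]
    rw [isLittleO_one_iff]
    have h0 : h 0 = 0 := by simpa using hz 0 le_rfl
    simpa [h0] using (hC.continuous.tendsto 0)
  | succ k ih =>
    have hd : ContDiff ℝ (⊤ : ℕ∞) (deriv h) := (contDiff_infty_iff_deriv.1 hC).2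
    have hdz : ∀ i ≤ k, iteratedDeriv i (deriv h) 0 = 0 := by
      intro i hi
      rw [← iteratedDeriv_succ']
      exact hz (i+1) (Nat.succ_le_succ hi)
    have ho := ih (deriv h) hd hdz
    have h0 : h 0 = 0 := by simpa using hz 0 (Nat.zero_le _)
    rw [isLittleO_iff]
    intro ε hε
    have := (isLittleO_iff.1 ho) hε
    rw [Metric.eventually_nhds_iff] at this ⊢
    obtain ⟨δ, hδ, hb⟩ := this
    refine ⟨δ, hδ, fun {x} hx => ?_⟩
    have hxd : dist x 0 < δ := hx
    -- on segment [min 0 x, max 0 x]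
    have key : ‖h x - h 0‖ ≤ (ε * |x| ^ k) * ‖x - 0‖ := by
      apply Convex.norm_image_sub_le_of_norm_hasDerivWithin_le
        (f := h) (f' := deriv h) (s := Icc (min 0 x) (max 0 x))
        (fun t ht => ((hC.differentiable (by simp) t).hasDerivAt).hasDerivWithinAt)
        ?_ (convex_Icc _ _) ?_ ?_
      · intro t ht
        have h1 : |t| ≤ |x| := by
          rcases ht with ⟨h1, h2⟩
          rcases le_or_gt 0 x with hx0 | hx0
          · rw [abs_of_nonneg (le_trans (by simp [hx0] : (0:ℝ) ≤ min 0 x) h1)]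
            calc t ≤ max 0 x := h2
            _ = x := max_eq_right hx0
            _ ≤ |x| := le_abs_self x
          · rw [abs_of_nonpos (le_trans h2 (by simp [le_of_lt hx0]))]
            have : min 0 x = x := min_eq_right hx0.le
            rw [this] at h1
            calc -t ≤ -x := by linarith
            _ ≤ |x| := by rw [abs_of_neg hx0]
        have h2 : dist t 0 < δ := by
          rw [Real.dist_eq, sub_zero]
          calc |t| ≤ |x| := h1
          _ = dist x 0 := by rw [Real.dist_eq, sub_zero]
          _ < δ := hxd
        calc ‖deriv h t‖ ≤ ε * ‖t ^ k‖ := hb h2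
        _ ≤ ε * |x| ^ k := by
            rw [norm_pow]
            exact mul_le_mul_of_nonneg_left (pow_le_pow_left₀ (abs_nonneg t) h1 k) hε.le
      · exact ⟨min_le_left _ _, le_max_left _ _⟩
      · exact ⟨min_le_right _ _, le_max_right _ _⟩
    rw [h0, sub_zero, sub_zero] at key
    calc ‖h x‖ ≤ ε * |x| ^ k * ‖x‖ := key
    _ = ε * ‖x ^ (k+1)‖ := by
        rw [norm_pow, Real.norm_eq_abs, pow_succ]; ring

lemma deriv_pos_of_inv (g h : ℝ → ℝ) (hinv : ∀ x, h (g x) = x)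
    (hgd : Differentiable ℝ g) (hhd : Differentiable ℝ h)
    (hmono : StrictMono g) (x : ℝ) : 0 < deriv g x := by
  have hcomp : HasDerivAt (h ∘ g) (deriv h (g x) * deriv g x) x :=
    ((hhd (g x)).hasDerivAt).comp x ((hgd x).hasDerivAt)
  have hid : (h ∘ g) = id := funext hinv
  rw [hid] at hcomp
  have h1 : deriv h (g x) * deriv g x = 1 := hcomp.unique (hasDerivAt_id x)
  have h2 : 0 ≤ deriv g x := by
    have h3 := (hgd x).hasDerivAt
    rw [hasDerivAt_iff_tendsto_slope] at h3
    refine ge_of_tendsto h3 ?_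
    filter_upwards [self_mem_nhdsWithin] with y hy
    rcases lt_or_gt_of_ne (hy : y ≠ x) with hlt | hgt
    · have : g y < g x := hmono hlt
      rw [slope_def_field]
      exact le_of_lt (div_pos_of_neg_of_neg (by linarith) (by linarith))
    · have : g x < g y := hmono hgt
      rw [slope_def_field]
      exact le_of_lt (div_pos (by linarith) (by linarith))
  rcases h2.lt_or_eq with h | h
  · exact h
  · exfalso; rw [← h] at h1; simp at h1
lemma strictMono_invFun (g : ℝ → ℝ) (hbij : Function.Bijective g)
    (hmono : StrictMono g) : StrictMono (Function.invFun g) := by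
  intro u v huv
  by_contra hcon
  push_neg at hcon
  have := hmono.monotone hcon
  rw [Function.rightInverse_invFun hbij.2 u, Function.rightInverse_invFun hbij.2 v] at this
  exact absurd this (not_le.2 huv)

lemma iteratedDeriv_pow' (k : ℕ) : ∀ i ≤ k,
    iteratedDeriv i (fun x : ℝ => x ^ k) = fun x => (k.descFactorial i : ℝ) * x ^ (k - i) := by
  intro i
  induction i with
  | zero => intro _; simp
  | succ i ih =>
    intro hik
    have hik' : i ≤ k := le_trans (Nat.le_succ i) hik
    rw [iteratedDeriv_succ, ih hik']
    funext x
    have : deriv (fun x : ℝ => (k.descFactorial i : ℝ) * x ^ (k - i)) x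
        = (k.descFactorial i : ℝ) * (((k - i : ℕ) : ℝ) * x ^ (k - i - 1)) := by
      rw [deriv_const_mul _ (differentiable_pow (k-i)).differentiableAt, deriv_pow_field]
    rw [this, Nat.descFactorial_succ]
    have hki : 1 ≤ k - i := Nat.le_sub_of_add_le (by omega)
    push_cast [Nat.cast_sub hik']
    have h2 : k - (i+1) = k - i - 1 := by omega
    rw [h2]
    ring

lemma iteratedDeriv_monomial (c : ℝ) (k i : ℕ) (hik : i ≤ k) :
    iteratedDeriv i (fun x : ℝ => c * x ^ k) 0 = if i = k then c * k.factorial else 0 := by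
  have hC : ContDiff ℝ (i : ℕ∞) (fun x : ℝ => x ^ k) := by
    apply ContDiff.pow
    exact contDiff_id
  have h1 : iteratedDeriv i (fun x : ℝ => c * x ^ k) 0
      = c * iteratedDeriv i (fun x : ℝ => x ^ k) 0 := by
    rw [← iteratedDerivWithin_univ, ← iteratedDerivWithin_univ]
    exact iteratedDerivWithin_const_mul (Set.mem_univ 0) uniqueDiffOn_univ c
      hC.contDiffWithinAt
  rw [h1, iteratedDeriv_pow' k i hik]
  rcases eq_or_lt_of_le hik with h | h
  · subst h
    simp [Nat.descFactorial_self]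
  · have h3 : k - i ≠ 0 := by omega
    have h4 : i ≠ k := by omega
    simp [zero_pow h3, h4]

set_option maxHeartbeats 2000000 in
lemma kopell_core (f G : ℝ → ℝ) (k : ℕ) (c₁ δ : ℝ)
    (hc₁ : 0 < c₁) (hδ : 0 < δ)
    (hGC : ContDiff ℝ (⊤ : ℕ∞) G)
    (hGm : StrictMono G)
    (hG0 : G 0 = 0)
    (hG' : ∀ x, 0 < deriv G x)
    (hcomm : ∀ x, f (G x) = G (f x))
    (hcontr : ∀ x ∈ Set.Ioc (0:ℝ) δ, c₁ * x ^ k ≤ x - G x)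
    (hflat : (fun x => f x - x) =o[𝓝 (0:ℝ)] fun x => x ^ k)
    (hmoves : ∀ ε > 0, ∃ x, x ∈ Set.Ioc (0:ℝ) ε ∧ f x ≠ x) : False := by
  have hGd : Differentiable ℝ G := hGC.differentiable (by simp)
  have hGpos : ∀ x : ℝ, 0 < x → 0 < G x := fun x hx => hG0 ▸ hGm hx
  have hGlt : ∀ x ∈ Set.Ioc (0:ℝ) δ, G x < x := by
    intro x hx
    have h1 := hcontr x hx
    nlinarith [pow_pos hx.1 k]
  -- extract δ₂ from flatness with ε = c₁/2
  have hball : ∀ ε : ℝ, 0 < ε → ∃ δ₂ > 0, ∀ x : ℝ, |x| < δ₂ → |f x - x| ≤ ε * |x| ^ k := by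
    intro ε hε
    have := isLittleO_iff.1 hflat hε
    rw [Metric.eventually_nhds_iff] at this
    obtain ⟨δ₂, hδ₂, hb⟩ := this
    refine ⟨δ₂, hδ₂, fun x hx => ?_⟩
    have := hb (show dist x 0 < δ₂ by simpa [Real.dist_eq] using hx)
    simpa [abs_pow] using this
  obtain ⟨δ₂, hδ₂, hf2⟩ := hball (c₁/2) (half_pos hc₁)
  set ρ := min δ (min δ₂ 1) with hρdef
  have hρ : 0 < ρ := by positivity
  obtain ⟨x₀, hx₀mem, hfx₀⟩ := hmoves (ρ/2) (by positivity)
  obtain ⟨hx₀pos, hx₀le⟩ := hx₀mem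
  have hx₀δ : x₀ ≤ δ := le_trans hx₀le (by
    have := min_le_left δ (min δ₂ 1); linarith)
  have hx₀δ₂ : x₀ < δ₂ := lt_of_le_of_lt hx₀le (by
    have h1 := min_le_right δ (min δ₂ 1)
    have h2 := min_le_left δ₂ 1
    linarith)
  have hx₀1 : x₀ ≤ 1 := le_trans hx₀le (by
    have h1 := min_le_right δ (min δ₂ 1)
    have h2 := min_le_right δ₂ 1
    linarith)
  set y₀ := f x₀ with hy₀def
  have hy₀close : |y₀ - x₀| ≤ c₁/2 * x₀ ^ k := by
    have := hf2 x₀ (by rwa [abs_of_pos hx₀pos])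
    rwa [abs_of_pos hx₀pos] at this
  have hckx₀ : c₁ * x₀ ^ k < x₀ := by
    have h1 := hcontr x₀ ⟨hx₀pos, hx₀δ⟩
    have h2 := hGpos x₀ hx₀pos
    linarith
  have hy₀close2 : |y₀ - x₀| < x₀ / 2 := by
    calc |y₀ - x₀| ≤ c₁/2 * x₀ ^ k := hy₀close
    _ < x₀ / 2 := by linarith
  set a₀ := min x₀ y₀ with ha₀def
  set b₀ := max x₀ y₀ with hb₀def
  have habs := abs_sub_lt_iff.1 hy₀close2
  have ha₀pos : 0 < a₀ := by
    rcases min_le_iff.1 (le_refl a₀) with _ | _ <;>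
    · simp only [ha₀def, lt_min_iff]; constructor <;> linarith
  have hb₀lt : b₀ < 3/2 * x₀ := by
    simp only [hb₀def, max_lt_iff]; constructor <;> linarith
  have ha₀b₀ : a₀ < b₀ := by
    rcases lt_or_gt_of_ne hfx₀ with h | h
    · simp only [ha₀def, hb₀def]
      rw [min_eq_right h.le, max_eq_left h.le]; exact h
    · simp only [ha₀def, hb₀def]
      rw [min_eq_left h.le, max_eq_right h.le]; exact h
  have hb₀δ : b₀ ≤ δ := by
    have : (3:ℝ)/2 * x₀ ≤ 3/4 * ρ := by linarith
    have h1 := min_le_left δ (min δ₂ 1)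
    linarith
  have hb₀δ₂ : b₀ < δ₂ := by
    have h1 := min_le_right δ (min δ₂ 1)
    have h2 := min_le_left δ₂ 1
    linarith
  have ha₀x₀ : a₀ ≤ x₀ := min_le_left _ _
  have hx₀b₀ : x₀ ≤ b₀ := le_max_left _ _
  -- invariance of Ioc 0 b₀
  have hSinv : ∀ x ∈ Set.Ioc (0:ℝ) b₀, G x ∈ Set.Ioc (0:ℝ) b₀ := by
    intro x hx
    exact ⟨hGpos x hx.1, le_trans (hGlt x ⟨hx.1, le_trans hx.2 hb₀δ⟩).le hx.2⟩
  have hiter : ∀ n, ∀ x ∈ Set.Ioc (0:ℝ) b₀, G^[n] x ∈ Set.Ioc (0:ℝ) b₀ := by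
    intro n
    induction n with
    | zero => simp
    | succ n ih =>
      intro x hx
      rw [Function.iterate_succ_apply]
      exact ih (G x) (hSinv x hx)
  have hx₀S : x₀ ∈ Set.Ioc (0:ℝ) b₀ := ⟨hx₀pos, hx₀b₀⟩
  have ha₀S : a₀ ∈ Set.Ioc (0:ℝ) b₀ := ⟨ha₀pos, le_trans ha₀x₀ hx₀b₀⟩
  have hb₀S : b₀ ∈ Set.Ioc (0:ℝ) b₀ := ⟨lt_of_lt_of_le ha₀pos (le_trans ha₀x₀ hx₀b₀), le_refl _⟩
  -- G b₀ ≤ a₀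
  have hGb₀a₀ : G b₀ ≤ a₀ := by
    rcases le_or_gt x₀ y₀ with h | h
    · -- b₀ = y₀, a₀ = x₀; G y₀ = f (G x₀)
      have hb : b₀ = y₀ := max_eq_right h
      have ha : a₀ = x₀ := min_eq_left h
      rw [hb, ha]
      have hGy₀ : G y₀ = f (G x₀) := (hcomm x₀).symm
      set x₁ := G x₀ with hx₁def
      have hx₁pos : 0 < x₁ := hGpos x₀ hx₀pos
      have hx₁lt : x₁ < x₀ := hGlt x₀ ⟨hx₀pos, hx₀δ⟩
      have hf2x₁ : |f x₁ - x₁| ≤ c₁/2 * x₁ ^ k := by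
        have := hf2 x₁ (by rw [abs_of_pos hx₁pos]; linarith)
        rwa [abs_of_pos hx₁pos] at this
      have hpow : x₁ ^ k ≤ x₀ ^ k := pow_le_pow_left₀ hx₁pos.le hx₁lt.le k
      have hgap : c₁ * x₀ ^ k ≤ x₀ - x₁ := hcontr x₀ ⟨hx₀pos, hx₀δ⟩
      rw [hGy₀]
      have h1 : f x₁ - x₁ ≤ c₁/2 * x₁ ^ k := (abs_le.1 hf2x₁).2
      have hpow' : c₁/2 * x₁ ^ k ≤ c₁/2 * x₀ ^ k :=
        mul_le_mul_of_nonneg_left hpow (by linarith)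
      linarith [mul_pos hc₁ (pow_pos hx₀pos k)]
    · have hb : b₀ = x₀ := max_eq_left h.le
      have ha : a₀ = y₀ := min_eq_right h.le
      rw [hb, ha]
      have hgap : c₁ * x₀ ^ k ≤ x₀ - G x₀ := hcontr x₀ ⟨hx₀pos, hx₀δ⟩
      have h1 : x₀ - y₀ ≤ c₁/2 * x₀ ^ k := by
        have := (abs_le.1 hy₀close).1; linarith
      linarith [mul_pos hc₁ (pow_pos hx₀pos k)]
  -- sequence tends to 0
  have hanti : ∀ n, G^[n+1] x₀ < G^[n] x₀ := by
    intro n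
    rw [Function.iterate_succ_apply']
    have hmem := hiter n x₀ hx₀S
    exact hGlt _ ⟨hmem.1, le_trans hmem.2 hb₀δ⟩
  have hantitone : Antitone (fun n => G^[n] x₀) := antitone_nat_of_succ_le fun n => (hanti n).le
  have hbdd : BddBelow (Set.range fun n => G^[n] x₀) := ⟨0, by rintro _ ⟨n, rfl⟩; exact (hiter n x₀ hx₀S).1.le⟩
  have htendsto : Tendsto (fun n => G^[n] x₀) atTop (𝓝 (⨅ n, G^[n] x₀)) := tendsto_atTop_ciInf hantitone hbdd
  set l := ⨅ n, G^[n] x₀ with hldef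
  have hl0 : l = 0 := by
    by_contra hne
    have hlnn : 0 ≤ l := le_ciInf fun n => (hiter n x₀ hx₀S).1.le
    have hlpos : 0 < l := lt_of_le_of_ne hlnn (Ne.symm hne)
    have hlle : l ≤ x₀ := ciInf_le hbdd 0
    have hGl : G l = l := by
      have h1 : Tendsto (fun n => G^[n+1] x₀) atTop (𝓝 l) := htendsto.comp (tendsto_add_atTop_nat 1)
      have h2 : Tendsto (fun n => G (G^[n] x₀)) atTop (𝓝 (G l)) :=
        (hGC.continuous.tendsto l).comp htendsto
      have h3 : (fun n => G^[n+1] x₀) = fun n => G (G^[n] x₀) := by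
        funext n; rw [Function.iterate_succ_apply']
      rw [h3] at h1
      exact tendsto_nhds_unique h2 h1
    have := hGlt l ⟨hlpos, le_trans hlle hx₀δ⟩
    linarith
  rw [hl0] at htendsto
  -- derivative of iterates
  set P : ℕ → ℝ → ℝ := fun n x => ∏ i ∈ Finset.range n, deriv G (G^[i] x) with hPdef
  have hasD : ∀ n x, HasDerivAt (G^[n]) (P n x) x := by
    intro n
    induction n with
    | zero => intro x; simpa [hPdef] using hasDerivAt_id x
    | succ n ih =>
      intro x
      rw [Function.iterate_succ']
      have h1 : HasDerivAt G (deriv G (G^[n] x)) (G^[n] x) := (hGd _).hasDerivAt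
      have h2 := h1.comp x (ih x)
      have h3 : deriv G (G^[n] x) * P n x = P (n+1) x := by
        rw [hPdef]; simp only []
        rw [Finset.prod_range_succ]; ring
      rw [← h3]; exact h2
  have hPpos : ∀ n x, 0 < P n x := fun n x => Finset.prod_pos fun i _ => hG' _
  -- Lipschitz bound for log ∘ deriv G on Icc 0 b₀
  have hb₀pos : 0 < b₀ := lt_of_lt_of_le ha₀pos ha₀b₀.le
  have hG'cont : Continuous (deriv G) := hGC.continuous_deriv (by exact_mod_cast le_top)
  have hG'C : ContDiff ℝ (⊤ : ℕ∞) (deriv G) := (contDiff_infty_iff_deriv.1 hGC).2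
  have hG''cont : Continuous (deriv (deriv G)) := hG'C.continuous_deriv (by exact_mod_cast le_top)
  obtain ⟨tm, htm, hm⟩ := isCompact_Icc.exists_isMinOn (Set.nonempty_Icc.2 hb₀pos.le)
    hG'cont.continuousOn
  set m := deriv G tm with hmdef
  have hmpos : 0 < m := hG' tm
  obtain ⟨tM, htM, hM⟩ := isCompact_Icc.exists_isMaxOn (Set.nonempty_Icc.2 hb₀pos.le)
    (continuous_abs.comp hG''cont).continuousOn
  set M := |deriv (deriv G) tM| with hMdef
  have hMnn : 0 ≤ M := abs_nonneg _
  set L := M / m with hLdef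
  have hLnn : 0 ≤ L := div_nonneg hMnn hmpos.le
  have hLip : ∀ u ∈ Set.Icc (0:ℝ) b₀, ∀ v ∈ Set.Icc (0:ℝ) b₀,
      |Real.log (deriv G u) - Real.log (deriv G v)| ≤ L * |u - v| := by
    intro u hu v hv
    have key := Convex.norm_image_sub_le_of_norm_hasDerivWithin_le
      (f := fun t => Real.log (deriv G t))
      (f' := fun t => deriv (deriv G) t / deriv G t) (s := Set.Icc (0:ℝ) b₀) (C := L)
      (fun t _ => (((hG'C.differentiable (by simp)) t).hasDerivAt.log
        (ne_of_gt (hG' t))).hasDerivWithinAt)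
      (fun t ht => by
        rw [Real.norm_eq_abs, abs_div, abs_of_pos (hG' t)]
        rw [hLdef]
        apply div_le_div₀ hMnn (hM ht) hmpos (hm ht))
      (convex_Icc _ _) hv hu
    simpa [Real.norm_eq_abs] using key
  -- notation for sequences
  have hmono : ∀ n, Monotone (G^[n]) := fun n => (hGm.iterate n).monotone
  -- sum bound
  have hsum : ∀ n, ∑ i ∈ Finset.range n, (G^[i] b₀ - G^[i+1] x₀) ≤ 2 * b₀ := by
    intro n
    have hterm : ∀ i, G^[i] b₀ - G^[i+1] x₀ ≤ (G^[i] b₀ - G^[i+1] b₀) + (G^[i+1] b₀ - G^[i+2] b₀) := by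
      intro i
      have h1 : G^[i+2] b₀ ≤ G^[i+1] a₀ := by
        have : G^[i+1] (G b₀) = G^[i+2] b₀ := by
          rw [← Function.iterate_succ_apply]
        rw [← this]
        exact hmono (i+1) hGb₀a₀
      have h2 : G^[i+1] a₀ ≤ G^[i+1] x₀ := hmono (i+1) ha₀x₀
      linarith
    calc ∑ i ∈ Finset.range n, (G^[i] b₀ - G^[i+1] x₀)
        ≤ ∑ i ∈ Finset.range n, ((G^[i] b₀ - G^[i+1] b₀) + (G^[i+1] b₀ - G^[i+2] b₀)) :=
          Finset.sum_le_sum fun i _ => hterm i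
    _ = (∑ i ∈ Finset.range n, (G^[i] b₀ - G^[i+1] b₀))
        + ∑ i ∈ Finset.range n, (G^[i+1] b₀ - G^[i+2] b₀) := Finset.sum_add_distrib
    _ = (G^[0] b₀ - G^[n] b₀) + ((fun i => G^[i+1] b₀) 0 - (fun i => G^[i+1] b₀) n) := by
        rw [Finset.sum_range_sub' (fun i => G^[i] b₀) n,
          Finset.sum_range_sub' (fun i => G^[i+1] b₀) n]
    _ ≤ 2 * b₀ := by
        simp only [Function.iterate_zero, id_eq]
        have h1 : 0 ≤ G^[n] b₀ := (hiter n b₀ hb₀S).1.le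
        have h2 : 0 ≤ G^[n+1] b₀ := (hiter (n+1) b₀ hb₀S).1.le
        have h3 : G^[1] b₀ ≤ b₀ := (hiter 1 b₀ hb₀S).2
        have h4 : G^[0+1] b₀ = G^[1] b₀ := rfl
        linarith [hiter 1 b₀ hb₀S]
  -- master interval and distortion
  set q := G x₀ with hqdef
  have hqpos : 0 < q := hGpos x₀ hx₀pos
  have hqlt : q < x₀ := hGlt x₀ ⟨hx₀pos, hx₀δ⟩
  have hqa₀ : q ≤ a₀ := le_trans (hGm.monotone hx₀b₀) hGb₀a₀
  have hIsub : ∀ i : ℕ, ∀ u ∈ Set.Icc q b₀, G^[i] u ∈ Set.Icc (G^[i+1] x₀) (G^[i] b₀) := by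
    intro i u hu
    constructor
    · rw [Function.iterate_succ_apply]
      exact hmono i hu.1
    · exact hmono i hu.2
  have hIcc0 : ∀ i : ℕ, Set.Icc (G^[i+1] x₀) (G^[i] b₀) ⊆ Set.Icc (0:ℝ) b₀ := by
    intro i z hz
    exact ⟨le_trans (hiter (i+1) x₀ hx₀S).1.le hz.1, le_trans hz.2 (hiter i b₀ hb₀S).2⟩
  have hdist : ∀ n : ℕ, ∀ u ∈ Set.Icc q b₀, ∀ v ∈ Set.Icc q b₀,
      P n v * Real.exp (-(2 * L * b₀)) ≤ P n u := by
    intro n u hu v hv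
    have hlogsub : ∀ w ∈ Set.Icc q b₀,
        Real.log (P n w) = ∑ i ∈ Finset.range n, Real.log (deriv G (G^[i] w)) := by
      intro w _
      rw [hPdef]
      exact Real.log_prod fun i _ => ne_of_gt (hG' _)
    have hbound : |Real.log (P n u) - Real.log (P n v)| ≤ 2 * L * b₀ := by
      rw [hlogsub u hu, hlogsub v hv, ← Finset.sum_sub_distrib]
      calc |∑ i ∈ Finset.range n, (Real.log (deriv G (G^[i] u)) - Real.log (deriv G (G^[i] v)))|
          ≤ ∑ i ∈ Finset.range n, |Real.log (deriv G (G^[i] u)) - Real.log (deriv G (G^[i] v))| :=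
            Finset.abs_sum_le_sum_abs _ _
      _ ≤ ∑ i ∈ Finset.range n, L * (G^[i] b₀ - G^[i+1] x₀) := by
          apply Finset.sum_le_sum
          intro i _
          have hui := hIsub i u hu
          have hvi := hIsub i v hv
          have h1 := hLip _ (hIcc0 i hui) _ (hIcc0 i hvi)
          refine le_trans h1 (mul_le_mul_of_nonneg_left ?_ hLnn)
          rw [abs_sub_le_iff]
          constructor <;> linarith [hui.1, hui.2, hvi.1, hvi.2]
      _ = L * ∑ i ∈ Finset.range n, (G^[i] b₀ - G^[i+1] x₀) := by
          rw [Finset.mul_sum]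
      _ ≤ L * (2 * b₀) := mul_le_mul_of_nonneg_left (hsum n) hLnn
      _ = 2 * L * b₀ := by ring
    have h2 : Real.log (P n v) - 2 * L * b₀ ≤ Real.log (P n u) := by
      have := (abs_le.1 hbound).1; linarith
    have e1 : P n v * Real.exp (-(2 * L * b₀)) = Real.exp (Real.log (P n v) - 2 * L * b₀) := by
      rw [Real.exp_sub, Real.exp_neg, Real.exp_log (hPpos n v)]; ring
    rw [e1]
    exact le_trans (Real.exp_le_exp.2 h2) (le_of_eq (Real.exp_log (hPpos n u)))
  -- commutation for iterates
  have hfiter : ∀ n, f (G^[n] x₀) = G^[n] y₀ := by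
    intro n
    induction n with
    | zero => simp [hy₀def]
    | succ n ih =>
      rw [Function.iterate_succ_apply', Function.iterate_succ_apply', ← ih, ← hcomm]
  -- the key lower bound
  set K := Real.exp (-(2 * L * b₀)) * (b₀ - a₀) / (x₀ - q) with hKdef
  have hKpos : 0 < K := by
    apply div_pos (mul_pos (Real.exp_pos _) (by linarith)) (by linarith)
  have hcontG : ∀ n : ℕ, Continuous (G^[n]) := fun n => hGC.continuous.iterate n
  have key : ∀ n : ℕ, K * (c₁ * (G^[n] x₀) ^ k) ≤ |f (G^[n] x₀) - G^[n] x₀| := by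
    intro n
    obtain ⟨ξ, hξ, hξeq⟩ := exists_hasDerivAt_eq_slope (G^[n]) (P n) ha₀b₀
      (hcontG n).continuousOn (fun x _ => hasD n x)
    obtain ⟨η, hη, hηeq⟩ := exists_hasDerivAt_eq_slope (G^[n]) (P n) hqlt
      (hcontG n).continuousOn (fun x _ => hasD n x)
    have hξI : ξ ∈ Set.Icc q b₀ := ⟨le_trans hqa₀ hξ.1.le, hξ.2.le⟩
    have hηI : η ∈ Set.Icc q b₀ := ⟨hη.1.le, le_trans hη.2.le hx₀b₀⟩
    have hslope1 : G^[n] b₀ - G^[n] a₀ = P n ξ * (b₀ - a₀) := by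
      rw [hξeq, div_mul_cancel₀ _ (show b₀ - a₀ ≠ 0 by linarith)]
    have hslope2 : G^[n] x₀ - G^[n] q = P n η * (x₀ - q) := by
      rw [hηeq, div_mul_cancel₀ _ (show x₀ - q ≠ 0 by linarith)]
    have habsval : |f (G^[n] x₀) - G^[n] x₀| = G^[n] b₀ - G^[n] a₀ := by
      rw [hfiter n]
      rcases le_or_gt x₀ y₀ with h | h
      · have ha : a₀ = x₀ := min_eq_left h
        have hb : b₀ = y₀ := max_eq_right h
        rw [ha, hb, abs_of_nonneg (by linarith [hmono n h] : (0:ℝ) ≤ G^[n] y₀ - G^[n] x₀)]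
      · have ha : a₀ = y₀ := min_eq_right h.le
        have hb : b₀ = x₀ := max_eq_left h.le
        rw [ha, hb, abs_of_nonpos (by linarith [hmono n h.le] : G^[n] y₀ - G^[n] x₀ ≤ (0:ℝ))]
        ring
    have hxq : G^[n] x₀ - G^[n] q = G^[n] x₀ - G^[n+1] x₀ := by
      rw [hqdef, ← Function.iterate_succ_apply]
    have hgapn : c₁ * (G^[n] x₀) ^ k ≤ G^[n] x₀ - G^[n+1] x₀ := by
      rw [Function.iterate_succ_apply']
      have hmem := hiter n x₀ hx₀S
      exact hcontr _ ⟨hmem.1, le_trans hmem.2 hb₀δ⟩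
    have hdist' := hdist n ξ hξI η hηI
    have hchain : K * (G^[n] x₀ - G^[n+1] x₀) ≤ G^[n] b₀ - G^[n] a₀ := by
      rw [hslope1, ← hxq, hslope2]
      have e : K * (P n η * (x₀ - q)) = P n η * Real.exp (-(2 * L * b₀)) * (b₀ - a₀) := by
        have hne : x₀ - q ≠ 0 := ne_of_gt (by linarith)
        rw [hKdef]
        field_simp [hne]
      rw [e]
      exact mul_le_mul_of_nonneg_right hdist' (by linarith)
    rw [habsval]
    calc K * (c₁ * (G^[n] x₀) ^ k) ≤ K * (G^[n] x₀ - G^[n+1] x₀) :=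
        mul_le_mul_of_nonneg_left hgapn hKpos.le
    _ ≤ G^[n] b₀ - G^[n] a₀ := hchain
  -- final contradiction
  obtain ⟨δ₃, hδ₃, hf3⟩ := hball (c₁ * K / 2) (by positivity)
  have hev : ∀ᶠ n in atTop, G^[n] x₀ < δ₃ := htendsto.eventually_lt_const hδ₃
  obtain ⟨n, hn⟩ := hev.exists
  have hxn := hiter n x₀ hx₀S
  have h1 := key n
  have h2 := hf3 (G^[n] x₀) (by rwa [abs_of_pos hxn.1])
  rw [abs_of_pos hxn.1] at h2
  have hp := pow_pos hxn.1 k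
  nlinarith [mul_pos (mul_pos hc₁ hKpos) hp]

lemma kopell_aux (f g : ℝ → ℝ)
    (hgbij : Function.Bijective g)
    (hgC : ContDiff ℝ (⊤ : ℕ∞) g) (hgiC : ContDiff ℝ (⊤ : ℕ∞) (Function.invFun g))
    (hgm : StrictMono g) (hg0 : g 0 = 0)
    (hcomm : ∀ x, f (g x) = g (f x))
    (k : ℕ) (c : ℝ) (hk : 1 ≤ k) (hc : c ≠ 0)
    (hgT : (fun x => g x - x - c * x ^ k) =o[𝓝 (0:ℝ)] fun x => x ^ k)
    (hflat : (fun x => f x - x) =o[𝓝 (0:ℝ)] fun x => x ^ k)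
    (hmoves : ∀ ε > 0, ∃ x ∈ Set.Ioc (0:ℝ) ε, f x ≠ x) : False := by
  have hgd : Differentiable ℝ g := hgC.differentiable (by simp)
  have hgid : Differentiable ℝ (Function.invFun g) := hgiC.differentiable (by simp)
  have hLI : ∀ x, Function.invFun g (g x) = x := fun x => Function.leftInverse_invFun hgbij.1 x
  have hRI : ∀ x, g (Function.invFun g x) = x := fun x => Function.rightInverse_invFun hgbij.2 x
  -- Taylor ball
  have hball : ∃ δ₄ > 0, ∀ x : ℝ, |x| < δ₄ → |g x - x - c * x ^ k| ≤ |c|/2 * |x| ^ k := by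
    have := isLittleO_iff.1 hgT (show (0:ℝ) < |c|/2 by positivity)
    rw [Metric.eventually_nhds_iff] at this
    obtain ⟨δ₄, hδ₄, hb⟩ := this
    exact ⟨δ₄, hδ₄, fun x hx => by
      simpa [abs_pow] using hb (show dist x 0 < δ₄ by simpa [Real.dist_eq] using hx)⟩
  obtain ⟨δ₄, hδ₄, hg4⟩ := hball
  rcases hc.lt_or_gt with hcneg | hcpos
  · -- c < 0 : use G = g
    apply kopell_core f g k (-c/2) (δ₄/2) (by linarith) (by linarith) hgC hgm hg0
      (deriv_pos_of_inv g (Function.invFun g) hLI hgd hgid hgm) hcomm ?_ hflat hmoves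
    intro x hx
    have hxpos := hx.1
    have hxle := hx.2
    have := hg4 x (by rw [abs_of_pos hxpos]; linarith)
    rw [abs_of_pos hxpos] at this
    have h1 := (abs_le.1 this).2
    rw [abs_of_neg hcneg] at h1
    nlinarith [pow_pos hxpos k]
  · -- c > 0 : use G = invFun g
    set G := Function.invFun g with hGdef
    have hGm : StrictMono G := strictMono_invFun g hgbij hgm
    have hG0 : G 0 = 0 := by nth_rewrite 1 [← hg0]; rw [hLI]
    have hG' : ∀ x, 0 < deriv G x := deriv_pos_of_inv G g hRI hgid hgd hGm
    have hcommG : ∀ x, f (G x) = G (f x) := by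
      intro x
      have h1 : f (g (G x)) = g (f (G x)) := hcomm (G x)
      rw [hRI x] at h1
      have h2 := congrArg G h1
      rw [hLI] at h2
      exact h2.symm
    set β := min (δ₄/2) 1 with hβdef
    have hβpos : 0 < β := by positivity
    have hgβpos : 0 < g β := by rw [← hg0]; exact hgm hβpos
    set M := 1 + 3*c/2 with hMdef
    have hM1 : 1 ≤ M := by rw [hMdef]; linarith
    set c₁ := c/2 / M^k with hc₁def
    have hc₁pos : 0 < c₁ := by positivity
    apply kopell_core f G k c₁ (g β) hc₁pos hgβpos hgiC hGm hG0 hG' hcommG ?_ hflat hmoves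
    intro x hx
    obtain ⟨hxpos, hxle⟩ := hx
    set y := G x with hydef
    have hgy : g y = x := hRI x
    have hypos : 0 < y := by
      rw [← hG0]
      exact hGm hxpos
    have hyβ : y ≤ β := by
      by_contra hcon
      push_neg at hcon
      have := hgm hcon
      rw [hgy] at this
      linarith
    have hyδ₄ : |y| < δ₄ := by
      rw [abs_of_pos hypos]
      have : β ≤ δ₄/2 := min_le_left _ _
      linarith
    have hy1 : y ≤ 1 := le_trans hyβ (min_le_right _ _)
    have hT := hg4 y hyδ₄
    rw [abs_of_pos hypos] at hT
    obtain ⟨hT1, hT2⟩ := abs_le.1 hT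
    rw [abs_of_pos hcpos] at hT1 hT2
    -- g y - y ≥ (c/2) y^k  and g y ≤ M * y
    have hyk : y ^ k ≤ y := pow_le_of_le_one hypos.le hy1 (by omega)
    have hgyM : x ≤ M * y := by
      rw [← hgy, hMdef]
      nlinarith [pow_pos hypos k, hyk, hT2]
    have hyx : x / M ≤ y := by
      rw [div_le_iff₀ (by linarith : (0:ℝ) < M)]
      linarith [hgyM]
    have hxy : c/2 * y ^ k ≤ x - y := by nlinarith
    have hxMk : c₁ * x ^ k ≤ c/2 * y ^ k := by
      rw [hc₁def]
      have h1 : (x / M) ^ k ≤ y ^ k := pow_le_pow_left₀ (by positivity) hyx k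
      rw [div_pow] at h1
      have hMk : (0:ℝ) < M ^ k := by positivity
      calc c/2 / M^k * x ^ k = c/2 * (x^k / M^k) := by ring
      _ ≤ c/2 * y ^ k := by
          apply mul_le_mul_of_nonneg_left h1 (by linarith)
    linarith

lemma littleo_neg_comp (k : ℕ) (F : ℝ → ℝ)
    (h : F =o[𝓝 (0:ℝ)] fun x => x ^ k) :
    (fun x => -F (-x)) =o[𝓝 (0:ℝ)] fun x => x ^ k := by
  have hneg : Tendsto (fun x : ℝ => -x) (𝓝 0) (𝓝 0) := by
    simpa using (continuous_neg.tendsto (0:ℝ))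
  have h2 := (h.comp_tendsto hneg).neg_left
  apply h2.trans_isBigO
  apply isBigO_of_le
  intro x
  simp [abs_pow]

lemma itd_const_succ (n : ℕ) : ∀ c : ℝ, iteratedDeriv (n+1) (fun _ : ℝ => c) 0 = 0 := by
  induction n with
  | zero => intro c; simp [iteratedDeriv_one]
  | succ n ih =>
    intro c
    rw [iteratedDeriv_succ', deriv_const']
    exact ih 0

lemma itd_sub {u v : ℝ → ℝ} (hu : ContDiff ℝ (⊤ : ℕ∞) u) (hv : ContDiff ℝ (⊤ : ℕ∞) v)
    (n : ℕ) (x : ℝ) :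
    iteratedDeriv n (fun y => u y - v y) x = iteratedDeriv n u x - iteratedDeriv n v x := by
  have : (fun y => u y - v y) = u - v := rfl
  rw [this, ← iteratedDerivWithin_univ, ← iteratedDerivWithin_univ, ← iteratedDerivWithin_univ]
  exact iteratedDerivWithin_sub (Set.mem_univ x) uniqueDiffOn_univ
    ((hu.of_le (by exact_mod_cast le_top)).contDiffWithinAt (n := n))
    ((hv.of_le (by exact_mod_cast le_top)).contDiffWithinAt (n := n))

lemma itd_id (n : ℕ) (hn : 2 ≤ n) : iteratedDeriv n (fun x : ℝ => x) 0 = 0 := by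
  obtain ⟨m, rfl⟩ : ∃ m, n = m + 2 := ⟨n - 2, by omega⟩
  rw [iteratedDeriv_succ']
  have : deriv (fun x : ℝ => x) = fun _ => (1:ℝ) := by
    funext t; simp
  rw [this]
  exact itd_const_succ m 1


theorem kopell_lemma
    (f g : ℝ → ℝ) (hf : IsDiffeo f) (hg : IsDiffeo g)
    (hfm : StrictMono f) (hgm : StrictMono g)
    (hf0 : f 0 = 0) (hg0 : g 0 = 0)
    (hcomm : f ∘ g = g ∘ f)
    (hT1 : deriv f 0 = 1)
    (hThigh : ∀ n : ℕ, 2 ≤ n → iteratedDeriv n f 0 = 0)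
    (hnotint : (0 : ℝ) ∉ interior {x : ℝ | f x = x}) :
    deriv g 0 = 1 ∧ ∀ n : ℕ, 2 ≤ n → iteratedDeriv n g 0 = 0 := by
  classical
  by_contra hcon
  have hgC := hg.2.1
  have hfC := hf.2.1
  set φ : ℝ → ℝ := fun x => g x - x with hφdef
  have hφC : ContDiff ℝ (⊤ : ℕ∞) φ := hgC.sub contDiff_id
  have hsubg : ∀ n, iteratedDeriv n φ 0 = iteratedDeriv n g 0 - iteratedDeriv n (fun x : ℝ => x) 0 :=
    fun n => itd_sub hgC (contDiff_id : ContDiff ℝ (⊤ : ℕ∞) (fun x : ℝ => x)) n 0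
  have hex : ∃ n, 1 ≤ n ∧ iteratedDeriv n φ 0 ≠ 0 := by
    rcases not_and_or.1 hcon with h | h
    · refine ⟨1, le_rfl, ?_⟩
      have h1 : iteratedDeriv 1 (fun x : ℝ => x) 0 = 1 := by simp [iteratedDeriv_one]
      rw [hsubg 1, iteratedDeriv_one, h1]
      intro hz
      exact h (by linarith [sub_eq_zero.1 hz])
    · push_neg at h
      obtain ⟨n, hn2, hnz⟩ := h
      refine ⟨n, by omega, ?_⟩
      rw [hsubg n, itd_id n hn2, sub_zero]
      exact hnz
  set k := Nat.find hex with hkdef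
  obtain ⟨hk1, hkne⟩ := Nat.find_spec hex
  have hmin : ∀ i < k, iteratedDeriv i φ 0 = 0 := by
    intro i hik
    rcases Nat.eq_zero_or_pos i with rfl | hi
    · simp [hφdef, hg0]
    · have h2 := Nat.find_min hex hik
      push_neg at h2
      exact h2 hi
  set c := iteratedDeriv k φ 0 / k.factorial with hcdef
  have hfacne : (k.factorial : ℝ) ≠ 0 := Nat.cast_ne_zero.2 (Nat.factorial_ne_zero k)
  have hcne : c ≠ 0 := div_ne_zero hkne hfacne
  have hmonC : ContDiff ℝ (⊤ : ℕ∞) (fun x : ℝ => c * x ^ k) :=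
    contDiff_const.mul (contDiff_id.pow k)
  have hgT : (fun x => g x - x - c * x ^ k) =o[𝓝 (0:ℝ)] fun x => x ^ k := by
    have hC : ContDiff ℝ (⊤ : ℕ∞) (fun x : ℝ => φ x - c * x ^ k) := hφC.sub hmonC
    have hvan : ∀ i ≤ k, iteratedDeriv i (fun x : ℝ => φ x - c * x ^ k) 0 = 0 := by
      intro i hik
      rw [itd_sub hφC hmonC i 0, iteratedDeriv_monomial c k i hik]
      rcases eq_or_lt_of_le hik with rfl | hlt
      · rw [if_pos rfl, hcdef]
        field_simp
        ring
      · rw [if_neg (by omega), hmin i hlt, sub_zero]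
    exact taylor_o k _ hC hvan
  have hfflat : (fun x => f x - x) =o[𝓝 (0:ℝ)] fun x => x ^ k := by
    apply taylor_o k _ (hfC.sub contDiff_id)
    intro i _
    rw [itd_sub hfC (contDiff_id : ContDiff ℝ (⊤ : ℕ∞) (fun x : ℝ => x)) i 0]
    simp only [show (id : ℝ → ℝ) = fun x : ℝ => x from rfl]
    match i with
    | 0 => simp [hf0]
    | 1 =>
      have h1 : iteratedDeriv 1 (fun x : ℝ => x) 0 = 1 := by simp [iteratedDeriv_one]
      rw [iteratedDeriv_one, h1, hT1, sub_self]
    | (n+2) => rw [hThigh (n+2) (by omega), itd_id (n+2) (by omega), sub_zero]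
  have hside : (∀ ε > 0, ∃ x ∈ Set.Ioc (0:ℝ) ε, f x ≠ x)
      ∨ (∀ ε > 0, ∃ x ∈ Set.Ioc (0:ℝ) ε, f (-x) ≠ -x) := by
    by_contra hcon2
    push_neg at hcon2
    obtain ⟨⟨ε₁, hε₁, h1⟩, ⟨ε₂, hε₂, h2⟩⟩ := hcon2
    apply hnotint
    rw [mem_interior_iff_mem_nhds]
    apply Filter.mem_of_superset (Ioo_mem_nhds (by linarith : -ε₂ < 0) hε₁)
    intro x hx
    simp only [Set.mem_setOf_eq]
    rcases lt_trichotomy x 0 with hneg | rfl | hpos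
    · have := h2 (-x) ⟨by linarith, by linarith [hx.1]⟩
      simpa using this
    · exact hf0
    · exact h1 x ⟨hpos, hx.2.le⟩
  rcases hside with hR | hL
  · exact kopell_aux f g hg.1 hgC hg.2.2 hgm hg0 (fun x => congrFun hcomm x) k c hk1 hcne
      hgT hfflat hR
  · set f' : ℝ → ℝ := fun x => -f (-x) with hf'def
    set g' : ℝ → ℝ := fun x => -g (-x) with hg'def
    have hgbij' : Function.Bijective g' := by
      constructor
      · intro a b hab
        simp only [hg'def, neg_inj] at hab
        have := hgm.injective hab
        linarith
      · intro y
        obtain ⟨x, hx⟩ := hg.1.2 (-y)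
        exact ⟨-x, by simp [hg'def, hx]⟩
    have hg'C : ContDiff ℝ (⊤ : ℕ∞) g' := (hgC.comp contDiff_neg).neg
    have hg'm : StrictMono g' := by
      intro a b hab
      have := hgm (neg_lt_neg hab)
      simp only [hg'def]
      linarith
    have hg'0 : g' 0 = 0 := by simp [hg'def, hg0]
    have hinv' : Function.invFun g' = fun x => -(Function.invFun g (-x)) := by
      funext x
      apply hgbij'.1
      rw [Function.rightInverse_invFun hgbij'.2 x]
      show x = -g (-(-(Function.invFun g (-x))))
      rw [neg_neg, Function.rightInverse_invFun hg.1.2, neg_neg]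
    have hg'iC : ContDiff ℝ (⊤ : ℕ∞) (Function.invFun g') := by
      rw [hinv']
      exact (hg.2.2.comp contDiff_neg).neg
    have hcomm' : ∀ x, f' (g' x) = g' (f' x) := by
      intro x
      simp only [hf'def, hg'def, neg_neg, neg_inj]
      exact congrFun hcomm (-x)
    set c' := (-1 : ℝ) ^ (k+1) * c with hc'def
    have hc'ne : c' ≠ 0 := mul_ne_zero (by positivity <;> skip) hcne
    have hgT' : (fun x => g' x - x - c' * x ^ k) =o[𝓝 (0:ℝ)] fun x => x ^ k := by
      have heq : (fun x => g' x - x - c' * x ^ k)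
          = fun x => -((fun y => g y - y - c * y ^ k) (-x)) := by
        funext x
        simp only [hg'def, hc'def]
        have h1 : (-x) ^ k = (-1 : ℝ) ^ k * x ^ k := by rw [neg_pow]
        rw [h1, pow_succ]
        ring
      rw [heq]
      exact littleo_neg_comp k _ hgT
    have hfflat' : (fun x => f' x - x) =o[𝓝 (0:ℝ)] fun x => x ^ k := by
      have heq : (fun x => f' x - x) = fun x => -((fun y => f y - y) (-x)) := by
        funext x; simp only [hf'def]; ring
      rw [heq]
      exact littleo_neg_comp k _ hfflat
    have hmoves' : ∀ ε > 0, ∃ x ∈ Set.Ioc (0:ℝ) ε, f' x ≠ x := by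
      intro ε hε
      obtain ⟨x, hx, hne⟩ := hL ε hε
      refine ⟨x, hx, fun hceq => hne ?_⟩
      simp only [hf'def] at hceq
      linarith
    exact kopell_aux f' g' hgbij' hg'C hg'iC hg'm hg'0 hcomm' k c' hk1 hc'ne hgT' hfflat' hmoves'
end

section
/- Let f and g₂ be orientation-reversing C^∞ diffeomorphisms of ℝ fixing 0 with f∘f = g₂∘g₂ and T_0 f = T_0 g₂ (equal n-th derivatives at 0 for all n ≥ 1). Define k : ℝ → ℝ by k(x) = x for x ≥ 0 and k(x) = g₂(f⁻¹(x)) for x < 0. Then k is an orientation-preserving C^∞ diffeomorphism of ℝ and f = k⁻¹ ∘ g₂ ∘ k. -/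
open Function Set Filter Topology

/-- Faà di Bruno argument: if `f` and `g` have the same derivatives at `0`, are smooth with
smooth inverse function, and fix `0`, then `g ∘ f⁻¹` has the Taylor series of the identity. -/
lemma taylor_comp_invFun (f g : ℝ → ℝ) (hfb : Function.Bijective f)
    (hfs : ContDiff ℝ (⊤ : ℕ∞) f) (hus : ContDiff ℝ (⊤ : ℕ∞) (Function.invFun f))
    (hgs : ContDiff ℝ (⊤ : ℕ∞) g) (hf0 : f 0 = 0)
    (hT : ∀ n : ℕ, iteratedDeriv n f 0 = iteratedDeriv n g 0) (m : ℕ) :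
    iteratedDeriv m (g ∘ Function.invFun f) 0 = iteratedDeriv m (id : ℝ → ℝ) 0 := by
  set u := Function.invFun f with hu
  have hu0 : u 0 = 0 := by
    have := Function.leftInverse_invFun hfb.1 0
    rwa [hf0] at this
  have hfu : f ∘ u = id := funext fun x => Function.rightInverse_invFun hfb.2 x
  have hser : ftaylorSeries ℝ g 0 = ftaylorSeries ℝ f 0 := by
    funext n
    refine ContinuousMultilinearMap.ext fun v => ?_
    show iteratedFDeriv ℝ n g 0 v = iteratedFDeriv ℝ n f 0 v
    rw [iteratedFDeriv_apply_eq_iteratedDeriv_mul_prod,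
      iteratedFDeriv_apply_eq_iteratedDeriv_mul_prod, hT n]
  have Hg : HasFTaylorSeriesUpTo ((⊤ : ℕ∞) : WithTop ℕ∞) (g ∘ u)
      (fun x => (ftaylorSeries ℝ g (u x)).taylorComp (ftaylorSeries ℝ u x)) := by
    rw [← hasFTaylorSeriesUpToOn_univ_iff]
    exact (hasFTaylorSeriesUpToOn_univ_iff.mpr (contDiff_iff_ftaylorSeries.mp hgs)).comp
      (hasFTaylorSeriesUpToOn_univ_iff.mpr (contDiff_iff_ftaylorSeries.mp hus))
      (Set.mapsTo_univ _ _)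
  have Hf : HasFTaylorSeriesUpTo ((⊤ : ℕ∞) : WithTop ℕ∞) (f ∘ u)
      (fun x => (ftaylorSeries ℝ f (u x)).taylorComp (ftaylorSeries ℝ u x)) := by
    rw [← hasFTaylorSeriesUpToOn_univ_iff]
    exact (hasFTaylorSeriesUpToOn_univ_iff.mpr (contDiff_iff_ftaylorSeries.mp hfs)).comp
      (hasFTaylorSeriesUpToOn_univ_iff.mpr (contDiff_iff_ftaylorSeries.mp hus))
      (Set.mapsTo_univ _ _)
  have e1 : iteratedFDeriv ℝ m (g ∘ u) 0 = iteratedFDeriv ℝ m (f ∘ u) 0 := by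
    rw [← Hg.eq_iteratedFDeriv (by exact_mod_cast le_top) 0,
      ← Hf.eq_iteratedFDeriv (by exact_mod_cast le_top) 0, hu0, hser]
  calc iteratedDeriv m (g ∘ u) 0
      = iteratedFDeriv ℝ m (g ∘ u) 0 (fun _ => 1) := iteratedDeriv_eq_iteratedFDeriv
    _ = iteratedFDeriv ℝ m (f ∘ u) 0 (fun _ => 1) := by rw [e1]
    _ = iteratedDeriv m (f ∘ u) 0 := iteratedDeriv_eq_iteratedFDeriv.symm
    _ = iteratedDeriv m (id : ℝ → ℝ) 0 := by rw [hfu]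

lemma glue_hasDerivAt (F G : ℝ → ℝ) (hF : Differentiable ℝ F) (hG : Differentiable ℝ G)
    (h0 : F 0 = G 0) (h1 : deriv F 0 = deriv G 0) (x : ℝ) :
    HasDerivAt (fun y => if y < 0 then G y else F y)
      (if x < 0 then deriv G x else deriv F x) x := by
  rcases lt_trichotomy x 0 with hx | hx | hx
  · have hev : (fun y => if y < 0 then G y else F y) =ᶠ[nhds x] G := by
      filter_upwards [Iio_mem_nhds hx] with y (hy : y < 0)
      rw [if_pos hy]
    simpa [hx] using ((hG x).hasDerivAt.congr_of_eventuallyEq hev)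
  · subst hx
    have key : HasDerivAt (fun y => if y < 0 then G y else F y) (deriv F 0) 0 := by
      rw [hasDerivAt_iff_tendsto_slope]
      rw [← nhdsLT_sup_nhdsGT (0 : ℝ), Filter.tendsto_sup]
      constructor
      · have hGs : Tendsto (slope G 0) (𝓝[<] (0:ℝ)) (𝓝 (deriv G 0)) :=
          (hasDerivAt_iff_tendsto_slope.mp (hG 0).hasDerivAt).mono_left
            (nhdsLT_le_nhdsNE 0)
        rw [h1]
        refine hGs.congr' ?_
        filter_upwards [self_mem_nhdsWithin] with y (hy : y < 0)
        simp [slope_def_field, hy, h0]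
      · have hFs : Tendsto (slope F 0) (𝓝[>] (0:ℝ)) (𝓝 (deriv F 0)) :=
          (hasDerivAt_iff_tendsto_slope.mp (hF 0).hasDerivAt).mono_left
            (nhdsGT_le_nhdsNE 0)
        refine hFs.congr' ?_
        filter_upwards [self_mem_nhdsWithin] with y (hy : 0 < y)
        simp [slope_def_field, not_lt.mpr hy.le]
    simpa using key
  · have hev : (fun y => if y < 0 then G y else F y) =ᶠ[nhds x] F := by
      filter_upwards [Ioi_mem_nhds hx] with y (hy : 0 < y)
      rw [if_neg (not_lt.mpr hy.le)]
    simpa [not_lt.mpr hx.le] using ((hF x).hasDerivAt.congr_of_eventuallyEq hev)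

lemma glue_contDiff : ∀ (n : ℕ) (F G : ℝ → ℝ), ContDiff ℝ (⊤ : ℕ∞) F → ContDiff ℝ (⊤ : ℕ∞) G →
    (∀ m : ℕ, iteratedDeriv m F 0 = iteratedDeriv m G 0) →
    ContDiff ℝ (n : ℕ) (fun y => if y < 0 then G y else F y) := by
  intro n
  induction n with
  | zero =>
    intro F G hF hG hie
    apply contDiff_zero.mpr
    apply Continuous.if ?_ hG.continuous hF.continuous
    intro a ha
    have : a = 0 := by
      have : frontier {x : ℝ | x < 0} = {0} := by
        rw [show {x : ℝ | x < 0} = Set.Iio 0 from rfl, frontier_Iio]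
      simpa [this] using ha
    subst this
    simpa [iteratedDeriv_zero] using (hie 0).symm
  | succ n IH =>
    intro F G hF hG hie
    have h0 : F 0 = G 0 := by simpa [iteratedDeriv_zero] using hie 0
    have h1 : deriv F 0 = deriv G 0 := by simpa [iteratedDeriv_one] using hie 1
    have hd := glue_hasDerivAt F G (hF.differentiable (by simp))
      (hG.differentiable (by simp)) h0 h1
    have hcast : ((n + 1 : ℕ) : WithTop ℕ∞) = (n : WithTop ℕ∞) + 1 := by push_cast; ring
    rw [hcast, contDiff_succ_iff_deriv]
    refine ⟨fun x => (hd x).differentiableAt, by simp, ?_⟩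
    have hderiv : deriv (fun y => if y < 0 then G y else F y)
        = fun y => if y < 0 then deriv G y else deriv F y := funext fun x => (hd x).deriv
    rw [hderiv]
    refine IH (deriv F) (deriv G) ?_ ?_ ?_
    · exact (contDiff_infty_iff_deriv.mp (by exact_mod_cast hF)).2
    · exact (contDiff_infty_iff_deriv.mp (by exact_mod_cast hG)).2
    · intro m
      rw [← iteratedDeriv_succ', ← iteratedDeriv_succ']
      exact hie (m + 1)

lemma glue_contDiff_top (F G : ℝ → ℝ) (hF : ContDiff ℝ (⊤ : ℕ∞) F)
    (hG : ContDiff ℝ (⊤ : ℕ∞) G)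
    (hie : ∀ m : ℕ, iteratedDeriv m F 0 = iteratedDeriv m G 0) :
    ContDiff ℝ (⊤ : ℕ∞) (fun y => if y < 0 then G y else F y) := by
  have : ContDiff ℝ ((⊤ : ℕ∞) : WithTop ℕ∞) (fun y => if y < 0 then G y else F y) :=
    contDiff_infty.mpr fun n => glue_contDiff n F G hF hG hie
  exact_mod_cast this

theorem explicit_conjugator
    (f g₂ : ℝ → ℝ) (hf : IsDiffeo f) (hg₂ : IsDiffeo g₂)
    (hfa : StrictAnti f) (hg₂a : StrictAnti g₂)
    (hf0 : f 0 = 0) (hg₂0 : g₂ 0 = 0)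
    (hsq : f ∘ f = g₂ ∘ g₂)
    (hT : ∀ n : ℕ, 1 ≤ n → iteratedDeriv n f 0 = iteratedDeriv n g₂ 0)
    (k : ℝ → ℝ)
    (hk₁ : ∀ x : ℝ, 0 ≤ x → k x = x)
    (hk₂ : ∀ x : ℝ, x < 0 → k x = g₂ (Function.invFun f x)) :
    IsDiffeo k ∧ StrictMono k ∧ f = Function.invFun k ∘ g₂ ∘ k := by
  obtain ⟨hfb, hfs, hus⟩ := hf
  obtain ⟨hgb, hgs, hvs⟩ := hg₂
  set u := Function.invFun f with hudef
  set v := Function.invFun g₂ with hvdef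
  have huf : ∀ x, u (f x) = x := fun x => Function.leftInverse_invFun hfb.1 x
  have hfu : ∀ x, f (u x) = x := fun x => Function.rightInverse_invFun hfb.2 x
  have hvg : ∀ x, v (g₂ x) = x := fun x => Function.leftInverse_invFun hgb.1 x
  have hgv : ∀ x, g₂ (v x) = x := fun x => Function.rightInverse_invFun hgb.2 x
  have hu0 : u 0 = 0 := by have := huf 0; rwa [hf0] at this
  have hv0 : v 0 = 0 := by have := hvg 0; rwa [hg₂0] at this
  have hTall : ∀ n : ℕ, iteratedDeriv n f 0 = iteratedDeriv n g₂ 0 := by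
    intro n
    rcases Nat.eq_zero_or_pos n with h | h
    · subst h; simp [iteratedDeriv_zero, hf0, hg₂0]
    · exact hT n h
  -- strict antitonicity of the inverses
  have hu_anti : StrictAnti u := fun a b hab => by
    have : f (u a) < f (u b) := by rw [hfu, hfu]; exact hab
    exact hfa.lt_iff_gt.mp this
  -- k agrees with the glued function
  have hkfun : k = fun x => if x < 0 then (g₂ ∘ u) x else id x := by
    funext x
    rcases lt_or_ge x 0 with hx | hx
    · simp [hx, hk₂ x hx]
    · simp [not_lt.mpr hx, hk₁ x hx]
  have hie : ∀ m : ℕ, iteratedDeriv m (id : ℝ → ℝ) 0 = iteratedDeriv m (g₂ ∘ u) 0 :=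
    fun m => (taylor_comp_invFun f g₂ hfb hfs hus hgs hf0 hTall m).symm
  have hks : ContDiff ℝ (⊤ : ℕ∞) k := by
    rw [hkfun]
    exact glue_contDiff_top id (g₂ ∘ u) contDiff_id (hgs.comp hus) hie
  -- strict monotonicity
  have hkmono : StrictMono k := by
    intro a b hab
    rcases lt_or_ge a 0 with ha | ha
    · rcases lt_or_ge b 0 with hb | hb
      · rw [hk₂ a ha, hk₂ b hb]
        exact hg₂a (hu_anti hab)
      · rw [hk₂ a ha, hk₁ b hb]
        have hua : 0 < u a := by rw [← hu0]; exact hu_anti ha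
        have : g₂ (u a) < 0 := by rw [← hg₂0]; exact hg₂a hua
        linarith
    · rw [hk₁ a ha, hk₁ b (le_of_lt (lt_of_le_of_lt ha hab))]
      exact hab
  -- surjectivity
  have hksurj : Function.Surjective k := by
    intro y
    rcases le_or_gt 0 y with hy | hy
    · exact ⟨y, hk₁ y hy⟩
    · refine ⟨f (v y), ?_⟩
      have hv_pos : 0 < v y := by
        have : g₂ (v y) < g₂ 0 := by rw [hgv, hg₂0]; exact hy
        exact hg₂a.lt_iff_gt.mp this
      have hfv : f (v y) < 0 := by rw [← hf0]; exact hfa hv_pos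
      rw [hk₂ _ hfv, huf, hgv]
  have hkbij : Function.Bijective k := ⟨hkmono.injective, hksurj⟩
  have hkinv : ∀ x, Function.invFun k (k x) = x :=
    fun x => Function.leftInverse_invFun hkbij.1 x
  -- the inverse of k
  have hkinvfun : Function.invFun k = fun y => if y < 0 then (f ∘ v) y else id y := by
    funext y
    rcases lt_or_ge y 0 with hy | hy
    · have hv_pos : 0 < v y := by
        have : g₂ (v y) < g₂ 0 := by rw [hgv, hg₂0]; exact hy
        exact hg₂a.lt_iff_gt.mp this
      have hfv : f (v y) < 0 := by rw [← hf0]; exact hfa hv_pos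
      have hky : k (f (v y)) = y := by rw [hk₂ _ hfv, huf, hgv]
      simp only [hy, if_pos, Function.comp_apply]
      conv_lhs => rw [← hky]
      rw [hkinv]
    · have hky : k y = y := hk₁ y hy
      simp only [not_lt.mpr hy, if_neg, id_eq, not_false_iff]
      rw [← hky, hkinv, hky]
  have hie' : ∀ m : ℕ, iteratedDeriv m (id : ℝ → ℝ) 0 = iteratedDeriv m (f ∘ v) 0 :=
    fun m => (taylor_comp_invFun g₂ f hgb hgs hvs hfs hg₂0 (fun n => (hTall n).symm) m).symm
  have hkinvs : ContDiff ℝ (⊤ : ℕ∞) (Function.invFun k) := by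
    rw [hkinvfun]
    exact glue_contDiff_top id (f ∘ v) contDiff_id (hfs.comp hvs) hie'
  refine ⟨⟨hkbij, hks, hkinvs⟩, hkmono, ?_⟩
  -- conjugacy: k ∘ f = g₂ ∘ k, hence f = k⁻¹ ∘ g₂ ∘ k
  funext x
  have key : k (f x) = g₂ (k x) := by
    rcases lt_trichotomy x 0 with hx | hx | hx
    · have hfx : 0 < f x := by rw [← hf0]; exact hfa hx
      rw [hk₁ _ hfx.le, hk₂ x hx]
      have : g₂ (g₂ (u x)) = f (f (u x)) := by
        have := congrFun hsq.symm (u x)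
        simpa using this
      rw [this, hfu]
    · subst hx
      rw [hf0, hk₁ 0 le_rfl, hg₂0]
    · have hfx : f x < 0 := by rw [← hf0]; exact hfa hx
      rw [hk₂ _ hfx, huf, hk₁ x hx.le]
  show f x = Function.invFun k (g₂ (k x))
  rw [← key, hkinv]
end
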